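/- arXiv:2604.09469 — 5 statements merged into one kernel-verified Lean document; each statement's English description precedes it below -/
import Mathlib

section
/- Let f, g : [1,∞) → [0,∞) be nondecreasing functions such that g(x) → ∞ as x → ∞ and f(x)/g(x) → α as x → ∞. For real s > 1 set F(s) = s·∫₁^∞ f(x)·x^{−s−1} dx and G(s) = s·∫₁^∞ g(x)·x^{−s−1} dx, and assume that for every s > 1 both integrals are finite. Assume moreover that G(s) → ∞ as s → 1⁺. Then F(s)/G(s) → α as s → 1⁺. -/
open MeasureTheory Filter Set

set_option maxHeartbeats 1000000 in
/-- **Abelian theorem for Mellin (Laplace–Stieltjes) transforms.**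
If `f, g : [1,∞) → [0,∞)` are nondecreasing, `g(x) → ∞`, and `f(x)/g(x) → α`
as `x → ∞`, then for `F(s) = s·∫₁^∞ f(x)·x^{-s-1} dx` and
`G(s) = s·∫₁^∞ g(x)·x^{-s-1} dx` (assumed finite for all `s > 1`),
assuming `G(s) → ∞` as `s → 1⁺`, one has `F(s)/G(s) → α` as `s → 1⁺`. -/
theorem stmt0 (f g : ℝ → ℝ) (α : ℝ)
    (hf0 : ∀ x ∈ Set.Ici (1 : ℝ), 0 ≤ f x)
    (hg0 : ∀ x ∈ Set.Ici (1 : ℝ), 0 ≤ g x)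
    (hfmono : MonotoneOn f (Set.Ici 1))
    (hgmono : MonotoneOn g (Set.Ici 1))
    (hginf : Filter.Tendsto g Filter.atTop Filter.atTop)
    (hratio : Filter.Tendsto (fun x => f x / g x) Filter.atTop (nhds α))
    (hfint : ∀ s : ℝ, 1 < s →
      MeasureTheory.IntegrableOn (fun x : ℝ => f x * x ^ (-s - 1)) (Set.Ici 1))
    (hgint : ∀ s : ℝ, 1 < s →
      MeasureTheory.IntegrableOn (fun x : ℝ => g x * x ^ (-s - 1)) (Set.Ici 1))
    (hGinf : Filter.Tendsto
      (fun s : ℝ => s * ∫ x in Set.Ici (1 : ℝ), g x * x ^ (-s - 1))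
      (nhdsWithin 1 (Set.Ioi 1)) Filter.atTop) :
    Filter.Tendsto
      (fun s : ℝ =>
        (s * ∫ x in Set.Ici (1 : ℝ), f x * x ^ (-s - 1)) /
        (s * ∫ x in Set.Ici (1 : ℝ), g x * x ^ (-s - 1)))
      (nhdsWithin 1 (Set.Ioi 1)) (nhds α) := by
  rw [Metric.tendsto_nhds]
  intro ε hε
  have hε2 : (0:ℝ) < ε / 2 := by positivity
  -- Choose X ≥ 1 with |f x - α g x| ≤ (ε/2) g x for x ≥ X
  obtain ⟨X₀, hX₀⟩ := eventually_atTop.mp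
    ((Metric.tendsto_nhds.mp hratio (ε/2) hε2).and
      ((hginf.eventually_ge_atTop 1).and (eventually_ge_atTop (1:ℝ))))
  set X : ℝ := max X₀ 1 with hXdef
  have hX1 : (1:ℝ) ≤ X := le_max_right _ _
  have hXbound : ∀ x, X ≤ x → |f x - α * g x| ≤ ε/2 * g x := by
    intro x hx
    obtain ⟨hd, hg1, hx1⟩ := hX₀ x (le_trans (le_max_left _ _) hx)
    have hgpos : 0 < g x := lt_of_lt_of_le zero_lt_one hg1
    have hrw : f x - α * g x = (f x / g x - α) * g x := by field_simp
    rw [hrw, abs_mul, abs_of_pos hgpos]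
    rw [Real.dist_eq] at hd
    nlinarith [abs_nonneg (f x / g x - α)]
  set M : ℝ := f X + |α| * g X with hM
  have hfX : 0 ≤ f X := hf0 X hX1
  have hgX : 0 ≤ g X := hg0 X hX1
  have hM0 : 0 ≤ M := by positivity
  set C : ℝ := 2 * (M * (X - 1)) with hC
  have hC0 : 0 ≤ C := by nlinarith
  -- The key estimate
  have key : ∀ s : ℝ, 1 < s → s < 2 →
      |(s * ∫ x in Ici (1:ℝ), f x * x ^ (-s - 1)) -
        α * (s * ∫ x in Ici (1:ℝ), g x * x ^ (-s - 1))|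
      ≤ C + ε/2 * (s * ∫ x in Ici (1:ℝ), g x * x ^ (-s - 1)) := by
    intro s hs1 hs2
    have hIf := hfint s hs1
    have hIg := hgint s hs1
    have hIh : IntegrableOn (fun x : ℝ => (f x - α * g x) * x ^ (-s - 1)) (Ici 1) := by
      have h1 : (fun x : ℝ => (f x - α * g x) * x ^ (-s - 1))
          = fun x : ℝ => f x * x ^ (-s - 1) - α * (g x * x ^ (-s - 1)) := by
        funext x; ring
      rw [h1]; exact hIf.sub (hIg.const_mul α)
    have habsI : IntegrableOn (fun x : ℝ => |(f x - α * g x) * x ^ (-s - 1)|) (Ici 1) :=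
      hIh.abs
    have hIco : Ico (1:ℝ) X ⊆ Ici 1 := fun x hx => hx.1
    have hIciX : Ici X ⊆ Ici (1:ℝ) := Ici_subset_Ici.mpr hX1
    have heq : (s * ∫ x in Ici (1:ℝ), f x * x ^ (-s - 1)) -
        α * (s * ∫ x in Ici (1:ℝ), g x * x ^ (-s - 1))
        = s * ∫ x in Ici (1:ℝ), (f x - α * g x) * x ^ (-s - 1) := by
      have h2 : ∫ x in Ici (1:ℝ), (f x - α * g x) * x ^ (-s - 1)
          = (∫ x in Ici (1:ℝ), f x * x ^ (-s - 1))
            - α * ∫ x in Ici (1:ℝ), g x * x ^ (-s - 1) := by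
        rw [← integral_const_mul, ← integral_sub hIf (hIg.const_mul α)]
        congr 1; funext x; ring
      rw [h2]; ring
    rw [heq, abs_mul, abs_of_pos (by linarith : (0:ℝ) < s)]
    have hb1 : |∫ x in Ici (1:ℝ), (f x - α * g x) * x ^ (-s - 1)|
        ≤ ∫ x in Ici (1:ℝ), |(f x - α * g x) * x ^ (-s - 1)| := by
      have := norm_integral_le_integral_norm (μ := volume.restrict (Ici 1))
        (fun x : ℝ => (f x - α * g x) * x ^ (-s - 1))
      simp only [Real.norm_eq_abs] at this
      exact this
    have hdisj : Disjoint (Ico (1:ℝ) X) (Ici X) := by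
      rw [Set.disjoint_left]
      intro x hx hx'
      exact hx.2.not_ge hx'
    have hsplit : ∫ x in Ici (1:ℝ), |(f x - α * g x) * x ^ (-s - 1)|
        = (∫ x in Ico (1:ℝ) X, |(f x - α * g x) * x ^ (-s - 1)|)
          + ∫ x in Ici X, |(f x - α * g x) * x ^ (-s - 1)| := by
      rw [← Ico_union_Ici_eq_Ici hX1]
      exact setIntegral_union hdisj measurableSet_Ici
        (habsI.mono_set hIco) (habsI.mono_set hIciX)
    -- bound on [1, X)
    have hbIco : ∫ x in Ico (1:ℝ) X, |(f x - α * g x) * x ^ (-s - 1)| ≤ M * (X - 1) := by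
      have hfin : volume (Ico (1:ℝ) X) < ⊤ := measure_Ico_lt_top
      have hmono : ∀ x ∈ Ico (1:ℝ) X, |(f x - α * g x) * x ^ (-s - 1)| ≤ M := by
        intro x hx
        have hx1 : (1:ℝ) ≤ x := hx.1
        have hwle : x ^ (-s - 1) ≤ 1 :=
          Real.rpow_le_one_of_one_le_of_nonpos hx1 (by linarith)
        have hw0 : (0:ℝ) ≤ x ^ (-s - 1) := Real.rpow_nonneg (by linarith) _
        have hfle : f x ≤ f X := hfmono hx1 hX1 hx.2.le
        have hgle : g x ≤ g X := hgmono hx1 hX1 hx.2.le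
        have h1 : |f x - α * g x| ≤ |f x| + |α * g x| := abs_sub _ _
        rw [abs_mul, abs_of_nonneg (hf0 x hx1), abs_of_nonneg (hg0 x hx1)] at h1
        have h2 : |f x - α * g x| ≤ M := by
          have : |α| * g x ≤ |α| * g X := mul_le_mul_of_nonneg_left hgle (abs_nonneg α)
          rw [hM]; linarith
        rw [abs_mul, abs_of_nonneg hw0]
        nlinarith [abs_nonneg (f x - α * g x)]
      calc ∫ x in Ico (1:ℝ) X, |(f x - α * g x) * x ^ (-s - 1)|
          ≤ ∫ _x in Ico (1:ℝ) X, M :=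
            setIntegral_mono_on (habsI.mono_set hIco)
              (integrableOn_const hfin.ne) measurableSet_Ico hmono
        _ = (volume (Ico (1:ℝ) X)).toReal * M := by
            rw [setIntegral_const, smul_eq_mul]; rfl
        _ = (X - 1) * M := by
            rw [Real.volume_Ico, ENNReal.toReal_ofReal (by linarith)]
        _ = M * (X - 1) := mul_comm _ _
    -- bound on [X, ∞)
    have hbIci : ∫ x in Ici X, |(f x - α * g x) * x ^ (-s - 1)|
        ≤ ε/2 * ∫ x in Ici (1:ℝ), g x * x ^ (-s - 1) := by
      have hstep : ∫ x in Ici X, |(f x - α * g x) * x ^ (-s - 1)|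
          ≤ ∫ x in Ici X, ε/2 * (g x * x ^ (-s - 1)) := by
        have hIg2 : IntegrableOn (fun x : ℝ => ε/2 * (g x * x ^ (-s - 1))) (Ici 1) :=
          hIg.const_mul (ε/2)
        refine setIntegral_mono_on (habsI.mono_set hIciX)
          (hIg2.mono_set hIciX) measurableSet_Ici ?_
        intro x hx
        have hx1 : (1:ℝ) ≤ x := le_trans hX1 hx
        have hw0 : (0:ℝ) ≤ x ^ (-s - 1) := Real.rpow_nonneg (by linarith) _
        rw [abs_mul, abs_of_nonneg hw0]
        have hb := hXbound x hx
        nlinarith [abs_nonneg (f x - α * g x)]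
      have hstep2 : ∫ x in Ici X, ε/2 * (g x * x ^ (-s - 1))
          ≤ ∫ x in Ici (1:ℝ), ε/2 * (g x * x ^ (-s - 1)) := by
        have hIg2 : IntegrableOn (fun x : ℝ => ε/2 * (g x * x ^ (-s - 1))) (Ici 1) :=
          hIg.const_mul (ε/2)
        refine setIntegral_mono_set hIg2 ?_
          (HasSubset.Subset.eventuallyLE hIciX)
        refine (ae_restrict_iff' measurableSet_Ici).2 (ae_of_all _ ?_)
        intro x hx
        have hx1 : (1:ℝ) ≤ x := hx
        exact mul_nonneg hε2.le
          (mul_nonneg (hg0 x hx1) (Real.rpow_nonneg (by linarith) _))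
      calc ∫ x in Ici X, |(f x - α * g x) * x ^ (-s - 1)|
          ≤ ∫ x in Ici (1:ℝ), ε/2 * (g x * x ^ (-s - 1)) := hstep.trans hstep2
        _ = ε/2 * ∫ x in Ici (1:ℝ), g x * x ^ (-s - 1) := integral_const_mul _ _
    have hIg0 : (0:ℝ) ≤ ∫ x in Ici (1:ℝ), g x * x ^ (-s - 1) := by
      refine setIntegral_nonneg measurableSet_Ici ?_
      intro x hx
      have hx1 : (1:ℝ) ≤ x := hx
      exact mul_nonneg (hg0 x hx1) (Real.rpow_nonneg (by linarith) _)
    have htot : |∫ x in Ici (1:ℝ), (f x - α * g x) * x ^ (-s - 1)|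
        ≤ M * (X - 1) + ε/2 * ∫ x in Ici (1:ℝ), g x * x ^ (-s - 1) := by
      rw [hsplit] at hb1
      exact hb1.trans (add_le_add hbIco hbIci)
    have habs0 : (0:ℝ) ≤ |∫ x in Ici (1:ℝ), (f x - α * g x) * x ^ (-s - 1)| :=
      abs_nonneg _
    nlinarith [mul_nonneg hM0 (by linarith : (0:ℝ) ≤ X - 1)]
  -- conclude
  have hmem : ∀ᶠ s in nhdsWithin (1:ℝ) (Ioi 1), s ∈ Ioo (1:ℝ) 2 :=
    eventually_mem_set.mpr (Ioo_mem_nhdsGT_of_mem ⟨le_rfl, one_lt_two⟩)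
  filter_upwards [hmem, hGinf.eventually_ge_atTop (2*C/ε + 1)] with s hs hGs
  obtain ⟨hs1, hs2⟩ := hs
  have hkey := key s hs1 hs2
  have hGpos : (0:ℝ) < s * ∫ x in Ici (1:ℝ), g x * x ^ (-s - 1) := by
    have h0 : (0:ℝ) ≤ 2*C/ε := by positivity
    linarith
  rw [Real.dist_eq]
  have hrw : (s * ∫ x in Ici (1:ℝ), f x * x ^ (-s - 1)) /
      (s * ∫ x in Ici (1:ℝ), g x * x ^ (-s - 1)) - α
      = ((s * ∫ x in Ici (1:ℝ), f x * x ^ (-s - 1)) -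
          α * (s * ∫ x in Ici (1:ℝ), g x * x ^ (-s - 1))) /
        (s * ∫ x in Ici (1:ℝ), g x * x ^ (-s - 1)) := by
    rw [eq_div_iff hGpos.ne', sub_mul, div_mul_cancel₀ _ hGpos.ne']
  rw [hrw, abs_div, abs_of_pos hGpos, div_lt_iff₀ hGpos]
  have hCbound : C < ε/2 * (s * ∫ x in Ici (1:ℝ), g x * x ^ (-s - 1)) := by
    have h1 : ε/2 * (2*C/ε + 1) ≤ ε/2 * (s * ∫ x in Ici (1:ℝ), g x * x ^ (-s - 1)) :=
      mul_le_mul_of_nonneg_left hGs hε2.le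
    have h2 : ε/2 * (2*C/ε + 1) = C + ε/2 := by field_simp
    linarith
  nlinarith
end

section
/- Let S be a set of prime numbers and let α ∈ ℝ. For real x ≥ 2 define π(x) = #{p prime : p ≤ x}, π_S(x) = #{p ∈ S : p ≤ x}, the Chebyshev function ψ(x) = Σ_{p prime} Σ_{k ≥ 1, p^k ≤ x} log p, and ψ_S(x) = Σ_{p ∈ S} Σ_{k ≥ 1, p^k ≤ x} log p. If π_S(x)/π(x) → α as x → ∞, then ψ_S(x)/ψ(x) → α as x → ∞. -/
open Classical in
noncomputable def psiGen (Q : ℕ → Prop) (x : ℝ) : ℝ :=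
  ∑' p : ℕ, ∑' k : ℕ, if Q p ∧ 1 ≤ k ∧ ((p : ℝ)) ^ k ≤ x then Real.log p else 0

open Classical Finset in
theorem psiGen_eq_sum (Q : ℕ → Prop) (hQ : ∀ p, Q p → p.Prime) (x : ℝ) (hx : 2 ≤ x) :
    psiGen Q x = ∑ p ∈ (Finset.range (⌊x⌋₊ + 1)).filter Q,
      (Nat.log p ⌊x⌋₊ : ℝ) * Real.log p := by
  have hx0 : (0:ℝ) ≤ x := by linarith
  have hF : 2 ≤ ⌊x⌋₊ := Nat.le_floor (by exact_mod_cast hx)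
  have hF0 : ⌊x⌋₊ ≠ 0 := by omega
  have hinner : ∀ p : ℕ, (∑' k : ℕ, if Q p ∧ 1 ≤ k ∧ ((p : ℝ)) ^ k ≤ x then Real.log p else 0)
      = if Q p then (Nat.log p ⌊x⌋₊ : ℝ) * Real.log p else 0 := by
    intro p
    by_cases hQp : Q p
    · have hp := hQ p hQp
      have hp1 : 1 < p := hp.one_lt
      have hcond : ∀ k : ℕ, (Q p ∧ 1 ≤ k ∧ ((p : ℝ)) ^ k ≤ x) ↔ k ∈ Finset.Icc 1 (Nat.log p ⌊x⌋₊) := by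
        intro k
        rw [Finset.mem_Icc]
        constructor
        · rintro ⟨-, hk1, hkx⟩
          refine ⟨hk1, ?_⟩
          rw [Nat.le_log_iff_pow_le hp1 hF0]
          exact Nat.le_floor (by push_cast; exact hkx)
        · rintro ⟨hk1, hk2⟩
          refine ⟨hQp, hk1, ?_⟩
          have : (p:ℕ) ^ k ≤ ⌊x⌋₊ := (Nat.le_log_iff_pow_le hp1 hF0).mp hk2
          calc ((p:ℝ))^k = ((p^k : ℕ) : ℝ) := by push_cast; ring
          _ ≤ (⌊x⌋₊ : ℝ) := by exact_mod_cast this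
          _ ≤ x := Nat.floor_le hx0
      have := tsum_eq_sum (L := SummationFilter.unconditional ℕ) (s := Finset.Icc 1 (Nat.log p ⌊x⌋₊))
        (f := fun k : ℕ => if Q p ∧ 1 ≤ k ∧ ((p : ℝ)) ^ k ≤ x then Real.log p else 0)
        (by intro k hk; beta_reduce; rw [if_neg]; rw [← hcond k] at hk; exact hk)
      rw [this, if_pos hQp]
      rw [Finset.sum_congr rfl (fun k hk => if_pos ((hcond k).mpr hk))]
      simp [Nat.card_Icc]
    · simp only [hQp, false_and, if_neg, if_false, tsum_zero]
  unfold psiGen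
  rw [tsum_congr hinner]
  rw [tsum_eq_sum (L := SummationFilter.unconditional ℕ) (s := Finset.range (⌊x⌋₊ + 1))]
  · rw [← Finset.sum_filter]
  · intro p hp
    by_cases hQp : Q p
    · rw [if_pos hQp]
      have hp1 : 1 < p := (hQ p hQp).one_lt
      have : Nat.log p ⌊x⌋₊ = 0 := Nat.log_eq_zero_iff.mpr (Or.inl (by
        simp only [Finset.mem_range, not_lt] at hp; omega))
      simp [this]
    · rw [if_neg hQp]

open Classical Finset in
theorem ncard_eq_card (Q : ℕ → Prop) (x : ℝ) (hx : 0 ≤ x) :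
    {p : ℕ | Q p ∧ (p : ℝ) ≤ x}.ncard = ((Finset.range (⌊x⌋₊ + 1)).filter Q).card := by
  rw [← Set.ncard_coe_finset]
  congr 1
  ext p
  simp only [Set.mem_setOf_eq, Finset.coe_filter, Finset.mem_range, Nat.lt_add_one_iff,
    Nat.le_floor_iff hx]
  tauto

open Classical Finset in
theorem sum_nonneg' (Q : ℕ → Prop) (hQ : ∀ p, Q p → p.Prime) (F : ℕ) :
    0 ≤ ∑ p ∈ (Finset.range (F + 1)).filter Q, (Nat.log p F : ℝ) * Real.log p := by
  apply Finset.sum_nonneg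
  intro p hp
  simp only [Finset.mem_filter] at hp
  have : (1:ℝ) ≤ p := by exact_mod_cast (hQ p hp.2).one_lt.le
  positivity

open Classical Finset in
theorem sum_le_card_mul_log (Q : ℕ → Prop) (hQ : ∀ p, Q p → p.Prime) (x : ℝ) (hx : 2 ≤ x) :
    ∑ p ∈ (Finset.range (⌊x⌋₊ + 1)).filter Q, (Nat.log p ⌊x⌋₊ : ℝ) * Real.log p
      ≤ ((Finset.range (⌊x⌋₊ + 1)).filter Q).card * Real.log x := by
  have hx0 : (0:ℝ) < x := by linarith
  have hF0 : ⌊x⌋₊ ≠ 0 := by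
    have : 2 ≤ ⌊x⌋₊ := Nat.le_floor (by exact_mod_cast hx); omega
  have := Finset.sum_le_card_nsmul ((Finset.range (⌊x⌋₊ + 1)).filter Q)
    (fun p => (Nat.log p ⌊x⌋₊ : ℝ) * Real.log p) (Real.log x) ?_
  · simpa [nsmul_eq_mul] using this
  · intro p hp
    simp only [Finset.mem_filter, Finset.mem_range] at hp
    have hp1 : 1 < p := (hQ p hp.2).one_lt
    have h1 : (p:ℕ) ^ (Nat.log p ⌊x⌋₊) ≤ ⌊x⌋₊ := Nat.pow_log_le_self p hF0
    have h2 : ((p:ℝ)) ^ (Nat.log p ⌊x⌋₊) ≤ x := by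
      calc ((p:ℝ)) ^ (Nat.log p ⌊x⌋₊) = ((p ^ Nat.log p ⌊x⌋₊ : ℕ) : ℝ) := by push_cast; ring
      _ ≤ (⌊x⌋₊ : ℝ) := by exact_mod_cast h1
      _ ≤ x := Nat.floor_le hx0.le
    calc (Nat.log p ⌊x⌋₊ : ℝ) * Real.log p = Real.log ((p:ℝ) ^ (Nat.log p ⌊x⌋₊)) := by
          rw [Real.log_pow]
    _ ≤ Real.log x := Real.log_le_log (by positivity) h2

open Classical Finset in
theorem card_sub_card_mul_log_le (Q : ℕ → Prop) (hQ : ∀ p, Q p → p.Prime) (x y : ℝ)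
    (hy : 2 ≤ y) (hxy : y ≤ x) :
    ((((Finset.range (⌊x⌋₊ + 1)).filter Q).card : ℝ)
      - (((Finset.range (⌊y⌋₊ + 1)).filter Q).card : ℝ)) * Real.log y
      ≤ ∑ p ∈ (Finset.range (⌊x⌋₊ + 1)).filter Q, (Nat.log p ⌊x⌋₊ : ℝ) * Real.log p := by
  have hx : 2 ≤ x := le_trans hy hxy
  have hF : 2 ≤ ⌊x⌋₊ := Nat.le_floor (by exact_mod_cast hx)
  have hF0 : ⌊x⌋₊ ≠ 0 := by omega
  set Px := (Finset.range (⌊x⌋₊ + 1)).filter Q with hPx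
  set Py := (Finset.range (⌊y⌋₊ + 1)).filter Q with hPy
  have hsub : Py ⊆ Px := by
    apply Finset.filter_subset_filter
    apply Finset.range_subset_range.mpr
    have : ⌊y⌋₊ ≤ ⌊x⌋₊ := Nat.floor_le_floor hxy
    omega
  have hnn : ∀ p ∈ Px, (0:ℝ) ≤ (Nat.log p ⌊x⌋₊ : ℝ) * Real.log p := by
    intro p hp
    simp only [hPx, Finset.mem_filter] at hp
    have := (hQ p hp.2).one_lt
    have : (1:ℝ) ≤ p := by exact_mod_cast this.le
    positivity
  have step1 : ∑ p ∈ Px \ Py, (Nat.log p ⌊x⌋₊ : ℝ) * Real.log p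
      ≤ ∑ p ∈ Px, (Nat.log p ⌊x⌋₊ : ℝ) * Real.log p :=
    Finset.sum_le_sum_of_subset_of_nonneg (Finset.sdiff_subset)
      (fun p hp _ => hnn p hp)
  have step2 : ((Px \ Py).card : ℝ) * Real.log y
      ≤ ∑ p ∈ Px \ Py, (Nat.log p ⌊x⌋₊ : ℝ) * Real.log p := by
    rw [← nsmul_eq_mul]
    apply Finset.card_nsmul_le_sum
    intro p hp
    simp only [Finset.mem_sdiff, hPx, hPy, Finset.mem_filter, Finset.mem_range,
      Nat.lt_add_one_iff, not_and] at hp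
    obtain ⟨⟨hpx, hQp⟩, hpy⟩ := hp
    have hp1 : 1 < p := (hQ p hQp).one_lt
    have hpy' : ¬ p ≤ ⌊y⌋₊ := fun hle => hpy hle hQp
    have hyp : y ≤ p := by
      by_contra hc
      exact hpy' (Nat.le_floor (le_of_not_ge hc))
    have hlogy : Real.log y ≤ Real.log p := Real.log_le_log (by linarith) hyp
    have hMp : 1 ≤ Nat.log p ⌊x⌋₊ := by
      rw [Nat.le_log_iff_pow_le hp1 hF0]
      simpa using hpx
    have h0 : 0 ≤ Real.log y := Real.log_nonneg (by linarith)
    calc Real.log y ≤ Real.log p := hlogy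
    _ = 1 * Real.log p := (one_mul _).symm
    _ ≤ (Nat.log p ⌊x⌋₊ : ℝ) * Real.log p := by
        apply mul_le_mul_of_nonneg_right _ (le_trans h0 hlogy)
        exact_mod_cast hMp
  have hcard : ((Px.card : ℝ) - (Py.card : ℝ)) ≤ ((Px \ Py).card : ℝ) := by
    rw [Finset.card_sdiff_of_subset hsub]
    have := Finset.card_le_card hsub
    push_cast [Nat.cast_sub this]
    linarith
  have h0 : 0 ≤ Real.log y := Real.log_nonneg (by linarith)
  calc ((Px.card : ℝ) - (Py.card : ℝ)) * Real.log y
      ≤ ((Px \ Py).card : ℝ) * Real.log y := mul_le_mul_of_nonneg_right hcard h0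
  _ ≤ _ := le_trans step2 step1

open Classical Finset in
theorem sum_mono' (Q : ℕ → Prop) (hQ : ∀ p, Q p → p.Prime) {F F' : ℕ} (h : F' ≤ F) :
    ∑ p ∈ (Finset.range (F' + 1)).filter Q, (Nat.log p F' : ℝ) * Real.log p
      ≤ ∑ p ∈ (Finset.range (F + 1)).filter Q, (Nat.log p F : ℝ) * Real.log p := by
  apply le_trans (Finset.sum_le_sum (f := fun p => (Nat.log p F' : ℝ) * Real.log p)
    (g := fun p => (Nat.log p F : ℝ) * Real.log p) ?_)
  · apply Finset.sum_le_sum_of_subset_of_nonneg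
    · exact Finset.filter_subset_filter _ (Finset.range_subset_range.mpr (by omega))
    · intro p hp _
      simp only [Finset.mem_filter] at hp
      have : (1:ℝ) ≤ p := by exact_mod_cast (hQ p hp.2).one_lt.le
      positivity
  · intro p hp
    simp only [Finset.mem_filter] at hp
    have h1 : (1:ℝ) ≤ p := by exact_mod_cast (hQ p hp.2).one_lt.le
    apply mul_le_mul_of_nonneg_right _ (Real.log_nonneg h1)
    exact_mod_cast Nat.log_mono_right h

open Classical Finset in
theorem centralBinom_le_sum' (Q : ℕ → Prop) (hQ : ∀ p, Q p ↔ p.Prime) (n : ℕ) (hn : 1 ≤ n) :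
    Real.log (Nat.centralBinom n)
      ≤ ∑ p ∈ (Finset.range (2 * n + 1)).filter Q,
          (Nat.log p (2 * n) : ℝ) * Real.log p := by
  set N := Nat.centralBinom n with hN
  have hN0 : N ≠ 0 := (Nat.centralBinom_pos n).ne'
  have hprod : (N : ℝ) = ∏ p ∈ N.factorization.support, (p : ℝ) ^ (N.factorization p) := by
    conv_lhs => rw [← Nat.factorization_prod_pow_eq_self hN0]
    rw [Finsupp.prod]
    push_cast
    rfl
  rw [hprod, Real.log_prod (fun p hp => by
    have hp' : p.Prime := Nat.prime_of_mem_primeFactors hp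
    have : (0:ℝ) < p := by exact_mod_cast hp'.pos
    positivity)]
  have h2n0 : 2 * n ≠ 0 := by omega
  have hsupp : N.factorization.support ⊆ (Finset.range (2 * n + 1)).filter Q := by
    intro p hp
    have hp' : p.Prime := Nat.prime_of_mem_primeFactors hp
    have hnu : 1 ≤ N.factorization p :=
      Nat.Prime.factorization_pos_of_dvd hp' hN0 (Nat.dvd_of_mem_primeFactors hp)
    have hple : p ≤ 2 * n := by
      calc p = p ^ 1 := (pow_one p).symm
      _ ≤ p ^ (N.factorization p) := Nat.pow_le_pow_right hp'.pos hnu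
      _ ≤ 2 * n := Nat.pow_factorization_choose_le (by omega)
    simp [Finset.mem_filter, Finset.mem_range, Nat.lt_add_one_iff, hple, (hQ p).mpr hp']
  refine le_trans (Finset.sum_le_sum ?_) (Finset.sum_le_sum_of_subset_of_nonneg hsupp ?_)
  · intro p hp
    have hp' : p.Prime := Nat.prime_of_mem_primeFactors hp
    have h1 : (1:ℝ) ≤ p := by exact_mod_cast hp'.one_lt.le
    rw [Real.log_pow]
    apply mul_le_mul_of_nonneg_right _ (Real.log_nonneg h1)
    have : N.factorization p ≤ Nat.log p (2 * n) := Nat.factorization_choose_le_log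
    exact_mod_cast this
  · intro p hp _
    simp only [Finset.mem_filter] at hp
    have : (1:ℝ) ≤ p := by exact_mod_cast ((hQ p).mp hp.2).one_lt.le
    positivity

open Classical Finset in
theorem psi_lower (Q : ℕ → Prop) (hQ : ∀ p, Q p ↔ p.Prime) (x : ℝ) (hx : 2 ≤ x) :
    (x / 2 - 1) * Real.log 4 - Real.log x
      ≤ ∑ p ∈ (Finset.range (⌊x⌋₊ + 1)).filter Q,
          (Nat.log p ⌊x⌋₊ : ℝ) * Real.log p := by
  have hF : 2 ≤ ⌊x⌋₊ := Nat.le_floor (by exact_mod_cast hx)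
  set n := ⌊x⌋₊ / 2 with hn
  have hn1 : 1 ≤ n := by omega
  have h2n : 2 * n ≤ ⌊x⌋₊ := by omega
  have key : 4 ^ n ≤ 2 * n * Nat.centralBinom n :=
    Nat.four_pow_le_two_mul_self_mul_centralBinom n (by omega)
  have keyR : (n : ℝ) * Real.log 4 - Real.log (2 * n) ≤ Real.log (Nat.centralBinom n) := by
    have h1 : Real.log (4 ^ n) ≤ Real.log (2 * n * Nat.centralBinom n) := by
      apply Real.log_le_log (by positivity)
      exact_mod_cast key
    rw [Real.log_pow] at h1
    rw [Real.log_mul (by positivity) (by exact_mod_cast (Nat.centralBinom_pos n).ne')] at h1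
    push_cast at h1 ⊢
    linarith
  have hmono := sum_mono' Q (fun p hp => (hQ p).mp hp) (h2n)
  have hcb := centralBinom_le_sum' Q hQ n hn1
  have hlog2n : Real.log (2 * (n:ℝ)) ≤ Real.log x := by
    apply Real.log_le_log (by positivity)
    calc (2 * (n:ℝ)) = ((2 * n : ℕ) : ℝ) := by push_cast; ring
    _ ≤ (⌊x⌋₊ : ℝ) := by exact_mod_cast h2n
    _ ≤ x := Nat.floor_le (by linarith)
  have hnlb : x / 2 - 1 ≤ (n : ℝ) := by
    have h1 : (⌊x⌋₊ : ℝ) ≥ x - 1 := by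
      have := Nat.lt_floor_add_one x; linarith
    have h2 : (2 * n : ℕ) ≥ ⌊x⌋₊ - 1 := by omega
    have h3 : ((⌊x⌋₊ : ℝ) - 1) ≤ 2 * (n:ℝ) := by
      have : ((⌊x⌋₊ - 1 : ℕ) : ℝ) ≤ ((2*n : ℕ) : ℝ) := by exact_mod_cast h2
      push_cast [Nat.cast_sub (by omega : 1 ≤ ⌊x⌋₊)] at this
      linarith
    linarith
  have hlog4 : (0:ℝ) ≤ Real.log 4 := Real.log_nonneg (by norm_num)
  calc (x / 2 - 1) * Real.log 4 - Real.log x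
      ≤ (n : ℝ) * Real.log 4 - Real.log (2 * n) :=
        by nlinarith [mul_le_mul_of_nonneg_right hnlb hlog4]
  _ ≤ Real.log (Nat.centralBinom n) := keyR
  _ ≤ _ := le_trans hcb hmono

open Filter Real

noncomputable def yf (x : ℝ) : ℝ := x / (Real.log x) ^ 2
noncomputable def Df (x : ℝ) : ℝ := (x / 2 - 1) * Real.log 4 - Real.log x

theorem tendsto_log_div_self : Tendsto (fun x : ℝ => Real.log x / x) atTop (nhds 0) :=
  Real.isLittleO_log_id_atTop.tendsto_div_nhds_zero

theorem tendsto_Df : Tendsto Df atTop atTop := by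
  have hc : (0:ℝ) < Real.log 4 / 4 := by
    have := Real.log_pos (by norm_num : (1:ℝ) < 4); linarith
  have hE : Tendsto (fun x : ℝ => Real.log 4 / 4 * x - Real.log 4) atTop atTop :=
    (tendsto_id.const_mul_atTop hc).atTop_add tendsto_const_nhds
  apply tendsto_atTop_mono' _ _ hE
  filter_upwards [tendsto_log_div_self.eventually (eventually_le_nhds (by linarith : (0:ℝ) < Real.log 4 / 4)),
    eventually_ge_atTop (0:ℝ)] with x hlog hx0
  have : Real.log x ≤ Real.log 4 / 4 * x := by
    rcases eq_or_lt_of_le hx0 with h | h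
    · simp [← h]
    · have := (div_le_iff₀ h).mp hlog; linarith
  unfold Df
  have h4 : (0:ℝ) < Real.log 4 := by linarith
  nlinarith

theorem tendsto_loglog : Tendsto (fun x : ℝ => Real.log (Real.log x) / Real.log x) atTop (nhds 0) :=
  tendsto_log_div_self.comp Real.tendsto_log_atTop

theorem tendsto_logy : Tendsto (fun x => Real.log (yf x) / Real.log x) atTop (nhds 1) := by
  have h : Tendsto (fun x : ℝ => 1 - 2 * (Real.log (Real.log x) / Real.log x)) atTop (nhds 1) := by
    have := (tendsto_const_nhds (x := (1:ℝ)) (f := atTop)).sub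
      (tendsto_loglog.const_mul (2:ℝ))
    simpa using this
  apply h.congr'
  filter_upwards [Real.tendsto_log_atTop.eventually (eventually_gt_atTop (0:ℝ)),
    eventually_gt_atTop (0:ℝ)] with x hlog hx
  unfold yf
  rw [Real.log_div (by positivity) (by positivity), Real.log_pow]
  push_cast
  field_simp

theorem tendsto_gf : Tendsto (fun x => (yf x + 1) * Real.log x / Df x) atTop (nhds 0) := by
  have hlog4 : (0:ℝ) < Real.log 4 := Real.log_pos (by norm_num)
  have hnum : Tendsto (fun x : ℝ => (Real.log x)⁻¹ + Real.log x / x) atTop (nhds 0) := by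
    have h1 : Tendsto (fun x : ℝ => (Real.log x)⁻¹) atTop (nhds 0) :=
      Real.tendsto_log_atTop.inv_tendsto_atTop
    simpa using h1.add tendsto_log_div_self
  have hden : Tendsto (fun x : ℝ => (1/2 - x⁻¹) * Real.log 4 - Real.log x / x) atTop
      (nhds (1/2 * Real.log 4)) := by
    have h1 : Tendsto (fun x : ℝ => (1/2 - x⁻¹) * Real.log 4) atTop (nhds (1/2 * Real.log 4)) := by
      have := ((tendsto_const_nhds (x := (1/2:ℝ)) (f := atTop)).sub
        tendsto_inv_atTop_zero).mul_const (Real.log 4)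
      simpa using this
    simpa using h1.sub tendsto_log_div_self
  have hne : (1/2 * Real.log 4 : ℝ) ≠ 0 := by positivity
  have := hnum.div hden hne
  simp only [zero_div] at this
  apply this.congr'
  filter_upwards [Real.tendsto_log_atTop.eventually (eventually_gt_atTop (0:ℝ)),
    eventually_gt_atTop (0:ℝ), tendsto_Df.eventually (eventually_gt_atTop (0:ℝ))]
    with x hlog hx hD
  have hident : (yf x + 1) * Real.log x / Df x
      = ((Real.log x)⁻¹ + Real.log x / x) / ((1/2 - x⁻¹) * Real.log 4 - Real.log x / x) := by
    have hDx : Df x = ((1/2 - x⁻¹) * Real.log 4 - Real.log x / x) * x := by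
      unfold Df; field_simp
    have hA : (Real.log x)⁻¹ + Real.log x / x = ((yf x + 1) * Real.log x) / x := by
      unfold yf; field_simp
    rw [hDx, hA, div_div, mul_comm x]
  rw [hident]; simp [Pi.div_apply]

theorem eventually_yf : ∀ᶠ x : ℝ in atTop, 2 ≤ yf x ∧ yf x ≤ x := by
  have h2 : Tendsto (fun x : ℝ => Real.log x ^ 2 / (1 * x + 0)) atTop (nhds 0) :=
    Real.tendsto_pow_log_div_mul_add_atTop 1 0 2 one_ne_zero
  simp only [one_mul, add_zero] at h2
  filter_upwards [h2.eventually (eventually_le_nhds (by norm_num : (0:ℝ) < 1/2)),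
    Real.tendsto_log_atTop.eventually (eventually_ge_atTop (1:ℝ)),
    eventually_gt_atTop (0:ℝ)] with x hle hlog hx
  have hlogpos : 0 < Real.log x := by linarith
  constructor
  · have h1 : Real.log x ^ 2 ≤ x / 2 := by
      have := (div_le_iff₀ hx).mp hle; linarith
    unfold yf
    rw [le_div_iff₀ (by positivity)]
    nlinarith
  · unfold yf
    rw [div_le_iff₀ (by positivity)]
    have h1 : (1:ℝ) ≤ Real.log x ^ 2 := by nlinarith
    nlinarith

open Classical in
theorem psiGen_nonneg (Q : ℕ → Prop) (hQ : ∀ p, Q p → p.Prime) (x : ℝ) (hx : 2 ≤ x) :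
    0 ≤ psiGen Q x := by
  rw [psiGen_eq_sum Q hQ x hx]; exact sum_nonneg' Q hQ _

open Classical in
theorem psiGen_le_pi_mul_log (Q : ℕ → Prop) (hQ : ∀ p, Q p → p.Prime) (x : ℝ) (hx : 2 ≤ x) :
    psiGen Q x ≤ ({p : ℕ | Q p ∧ (p : ℝ) ≤ x}.ncard : ℝ) * Real.log x := by
  rw [psiGen_eq_sum Q hQ x hx, ncard_eq_card Q x (by linarith)]
  exact sum_le_card_mul_log Q hQ x hx

open Classical in
theorem pi_sub_pi_mul_log_le_psiGen (Q : ℕ → Prop) (hQ : ∀ p, Q p → p.Prime) (x y : ℝ)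
    (hy : 2 ≤ y) (hxy : y ≤ x) :
    (({p : ℕ | Q p ∧ (p : ℝ) ≤ x}.ncard : ℝ) - ({p : ℕ | Q p ∧ (p : ℝ) ≤ y}.ncard : ℝ))
      * Real.log y ≤ psiGen Q x := by
  rw [psiGen_eq_sum Q hQ x (le_trans hy hxy), ncard_eq_card Q x (by linarith),
    ncard_eq_card Q y (by linarith)]
  exact card_sub_card_mul_log_le Q hQ x y hy hxy

open Classical in
theorem Df_le_psiGen (Q : ℕ → Prop) (hQ : ∀ p, Q p ↔ p.Prime) (x : ℝ) (hx : 2 ≤ x) :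
    Df x ≤ psiGen Q x := by
  rw [psiGen_eq_sum Q (fun p hp => (hQ p).mp hp) x hx]
  exact psi_lower Q hQ x hx

open Classical in
theorem ncard_le_self_add_one (Q : ℕ → Prop) (x : ℝ) (hx : 0 ≤ x) :
    ({p : ℕ | Q p ∧ (p : ℝ) ≤ x}.ncard : ℝ) ≤ x + 1 := by
  rw [ncard_eq_card Q x hx]
  calc (((Finset.range (⌊x⌋₊ + 1)).filter Q).card : ℝ)
      ≤ ((Finset.range (⌊x⌋₊ + 1)).card : ℝ) := by
        exact_mod_cast Finset.card_le_card (Finset.filter_subset _ _)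
  _ = (⌊x⌋₊ : ℝ) + 1 := by rw [Finset.card_range]; push_cast; ring
  _ ≤ x + 1 := by have := Nat.floor_le hx; linarith

open Classical in
theorem ncard_mono_pred (Q Q' : ℕ → Prop) (h : ∀ p, Q p → Q' p) (x : ℝ) (hx : 0 ≤ x) :
    ({p : ℕ | Q p ∧ (p : ℝ) ≤ x}.ncard : ℝ) ≤ ({p : ℕ | Q' p ∧ (p : ℝ) ≤ x}.ncard : ℝ) := by
  rw [ncard_eq_card Q x hx, ncard_eq_card Q' x hx]
  exact_mod_cast Finset.card_le_card (Finset.monotone_filter_right _ (fun p _ hp => h p hp))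



/-- The prime-counting function `π(x) = #{p prime : p ≤ x}`. -/
noncomputable def primePi (x : ℝ) : ℕ := {p : ℕ | p.Prime ∧ (p : ℝ) ≤ x}.ncard

/-- The counting function of a set `S` of primes: `π_S(x) = #{p ∈ S : p ≤ x}`. -/
noncomputable def primePiOf (S : Set ℕ) (x : ℝ) : ℕ := {p : ℕ | p ∈ S ∧ (p : ℝ) ≤ x}.ncard

open Classical in
/-- The Chebyshev function `ψ(x) = Σ_{p prime} Σ_{k ≥ 1, p^k ≤ x} log p`. -/
noncomputable def chebyshevPsi (x : ℝ) : ℝ :=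
  ∑' p : ℕ, ∑' k : ℕ, if p.Prime ∧ 1 ≤ k ∧ ((p : ℝ)) ^ k ≤ x then Real.log p else 0

open Classical in
/-- The partial Chebyshev function `ψ_S(x) = Σ_{p ∈ S} Σ_{k ≥ 1, p^k ≤ x} log p`. -/
noncomputable def chebyshevPsiOf (S : Set ℕ) (x : ℝ) : ℝ :=
  ∑' p : ℕ, ∑' k : ℕ, if p ∈ S ∧ 1 ≤ k ∧ ((p : ℝ)) ^ k ≤ x then Real.log p else 0

/-- **Transfer of natural density from π-normalization to ψ-normalization.**
If `S` is a set of primes and `π_S(x)/π(x) → α` as `x → ∞`, then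
`ψ_S(x)/ψ(x) → α` as `x → ∞`. -/
theorem stmt2 (S : Set ℕ) (hS : ∀ p ∈ S, p.Prime) (α : ℝ)
    (h : Filter.Tendsto (fun x : ℝ => (primePiOf S x : ℝ) / (primePi x : ℝ))
      Filter.atTop (nhds α)) :
    Filter.Tendsto (fun x : ℝ => chebyshevPsiOf S x / chebyshevPsi x)
      Filter.atTop (nhds α) := by
  classical
  have hpsi : ∀ t : ℝ, chebyshevPsi t = psiGen Nat.Prime t := by
    intro t
    unfold chebyshevPsi psiGen
    refine tsum_congr fun p => tsum_congr fun k => ?_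
    congr
  have hpsiS : ∀ t : ℝ, chebyshevPsiOf S t = psiGen (fun p => p ∈ S) t := by
    intro t
    unfold chebyshevPsiOf psiGen
    refine tsum_congr fun p => tsum_congr fun k => ?_
    congr
  have hpi : ∀ t : ℝ, (primePi t : ℝ) = ({p : ℕ | Nat.Prime p ∧ (p : ℝ) ≤ t}.ncard : ℝ) :=
    fun t => rfl
  have hpiS : ∀ t : ℝ, (primePiOf S t : ℝ) = ({p : ℕ | p ∈ S ∧ (p : ℝ) ≤ t}.ncard : ℝ) :=
    fun t => rfl
  -- the eventual "good set"
  have hev : ∀ᶠ x : ℝ in Filter.atTop, 2 ≤ x ∧ 2 ≤ yf x ∧ yf x ≤ x ∧ 0 < Df x ∧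
      (yf x + 1) * Real.log x / Df x < 1 ∧ 1 ≤ Real.log x := by
    filter_upwards [Filter.eventually_ge_atTop (2:ℝ), eventually_yf,
      tendsto_Df.eventually (Filter.eventually_gt_atTop (0:ℝ)),
      tendsto_gf.eventually (eventually_lt_nhds zero_lt_one),
      Real.tendsto_log_atTop.eventually (Filter.eventually_ge_atTop (1:ℝ))]
      with x h1 h2 h3 h4 h5
    exact ⟨h1, h2.1, h2.2, h3, h4, h5⟩
  -- ratio π(yf x)/π(x) → 0
  have hr0 : Filter.Tendsto (fun x : ℝ => (primePi (yf x) : ℝ) / (primePi x : ℝ))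
      Filter.atTop (nhds 0) := by
    apply tendsto_of_tendsto_of_tendsto_of_le_of_le' tendsto_const_nhds tendsto_gf
    · exact Filter.Eventually.of_forall fun x => by positivity
    · filter_upwards [hev] with x hx
      obtain ⟨hx2, hy2, hyx, hD, hg, hlog1⟩ := hx
      have hlx : (0:ℝ) < Real.log x := by linarith
      have h1 : Df x ≤ chebyshevPsi x := by
        rw [hpsi]; exact Df_le_psiGen Nat.Prime (fun p => Iff.rfl) x hx2
      have h2 : chebyshevPsi x ≤ (primePi x : ℝ) * Real.log x := by
        rw [hpsi, hpi]; exact psiGen_le_pi_mul_log Nat.Prime (fun _ hp => hp) x hx2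
      have h7 : Df x / Real.log x ≤ (primePi x : ℝ) := by
        rw [div_le_iff₀ hlx]; linarith
      have h5 : (primePi (yf x) : ℝ) ≤ yf x + 1 := by
        rw [hpi]; exact ncard_le_self_add_one Nat.Prime (yf x) (by linarith)
      have hDd : (0:ℝ) < Df x / Real.log x := by positivity
      calc (primePi (yf x) : ℝ) / (primePi x : ℝ)
          ≤ (yf x + 1) / (Df x / Real.log x) := by
            apply div_le_div₀ (by positivity) h5 hDd (le_trans (le_refl _) h7)
      _ = (yf x + 1) * Real.log x / Df x := by rw [div_div_eq_mul_div]
  -- lower bound function tends to α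
  have hlow : Filter.Tendsto (fun x : ℝ =>
      (((primePiOf S x : ℝ) - (primePi (yf x) : ℝ)) * Real.log (yf x))
        / ((primePi x : ℝ) * Real.log x)) Filter.atTop (nhds α) := by
    have heq : ∀ x : ℝ, (((primePiOf S x : ℝ) - (primePi (yf x) : ℝ)) * Real.log (yf x))
        / ((primePi x : ℝ) * Real.log x)
        = ((primePiOf S x : ℝ) / (primePi x : ℝ) - (primePi (yf x) : ℝ) / (primePi x : ℝ))
          * (Real.log (yf x) / Real.log x) := by
      intro x; rw [← sub_div, div_mul_div_comm]
    simp only [heq]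
    have := (h.sub hr0).mul tendsto_logy
    simpa using this
  -- upper bound function tends to α
  have hup : Filter.Tendsto (fun x : ℝ =>
      ((primePiOf S x : ℝ) * Real.log x)
        / (((primePi x : ℝ) - (primePi (yf x) : ℝ)) * Real.log (yf x)))
      Filter.atTop (nhds α) := by
    have htar : Filter.Tendsto (fun x : ℝ =>
        ((primePiOf S x : ℝ) / (primePi x : ℝ))
          / ((1 - (primePi (yf x) : ℝ) / (primePi x : ℝ)) * (Real.log (yf x) / Real.log x)))
        Filter.atTop (nhds α) := by
      have hden : Filter.Tendsto (fun x : ℝ =>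
          (1 - (primePi (yf x) : ℝ) / (primePi x : ℝ)) * (Real.log (yf x) / Real.log x))
          Filter.atTop (nhds 1) := by
        have := ((tendsto_const_nhds (x := (1:ℝ)) (f := Filter.atTop)).sub hr0).mul tendsto_logy
        simpa using this
      have := h.div hden one_ne_zero
      rw [div_one] at this
      exact this
    apply htar.congr'
    filter_upwards [hev] with x hx
    obtain ⟨hx2, hy2, hyx, hD, hg, hlog1⟩ := hx
    have hlx : (0:ℝ) < Real.log x := by linarith
    have hly : (0:ℝ) < Real.log (yf x) := Real.log_pos (by linarith)
    have h1 : Df x ≤ chebyshevPsi x := by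
      rw [hpsi]; exact Df_le_psiGen Nat.Prime (fun p => Iff.rfl) x hx2
    have h2 : chebyshevPsi x ≤ (primePi x : ℝ) * Real.log x := by
      rw [hpsi, hpi]; exact psiGen_le_pi_mul_log Nat.Prime (fun _ hp => hp) x hx2
    have h7 : Df x / Real.log x ≤ (primePi x : ℝ) := by
      rw [div_le_iff₀ hlx]; linarith
    have hπx : (0:ℝ) < (primePi x : ℝ) := lt_of_lt_of_le (by positivity) h7
    have h5 : (primePi (yf x) : ℝ) ≤ yf x + 1 := by
      rw [hpi]; exact ncard_le_self_add_one Nat.Prime (yf x) (by linarith)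
    have h6 : yf x + 1 < Df x / Real.log x := by
      rw [lt_div_iff₀ hlx]
      have := (div_lt_one hD).mp hg
      linarith
    have h8 : (primePi (yf x) : ℝ) < (primePi x : ℝ) := by
      calc (primePi (yf x) : ℝ) ≤ yf x + 1 := h5
      _ < Df x / Real.log x := h6
      _ ≤ (primePi x : ℝ) := h7
    have hgap : (0:ℝ) < (primePi x : ℝ) - (primePi (yf x) : ℝ) := by linarith
    field_simp
  -- squeeze
  apply tendsto_of_tendsto_of_tendsto_of_le_of_le' hlow hup
  · filter_upwards [hev] with x hx
    obtain ⟨hx2, hy2, hyx, hD, hg, hlog1⟩ := hx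
    have hlx : (0:ℝ) < Real.log x := by linarith
    have hly : (0:ℝ) < Real.log (yf x) := Real.log_pos (by linarith)
    have h1 : Df x ≤ chebyshevPsi x := by
      rw [hpsi]; exact Df_le_psiGen Nat.Prime (fun p => Iff.rfl) x hx2
    have h2 : chebyshevPsi x ≤ (primePi x : ℝ) * Real.log x := by
      rw [hpsi, hpi]; exact psiGen_le_pi_mul_log Nat.Prime (fun _ hp => hp) x hx2
    have hψpos : (0:ℝ) < chebyshevPsi x := lt_of_lt_of_le hD h1
    have hψS0 : (0:ℝ) ≤ chebyshevPsiOf S x := by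
      rw [hpsiS]; exact psiGen_nonneg _ (fun p hp => hS p hp) x hx2
    have h11 : ((primePiOf S x : ℝ) - (primePi (yf x) : ℝ)) * Real.log (yf x)
        ≤ chebyshevPsiOf S x := by
      have ha : ((primePiOf S x : ℝ) - (primePiOf S (yf x) : ℝ)) * Real.log (yf x)
          ≤ chebyshevPsiOf S x := by
        rw [hpsiS, hpiS, hpiS]
        exact pi_sub_pi_mul_log_le_psiGen _ (fun p hp => hS p hp) x (yf x) hy2 hyx
      have hb : (primePiOf S (yf x) : ℝ) ≤ (primePi (yf x) : ℝ) := by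
        rw [hpiS, hpi]
        exact ncard_mono_pred _ _ (fun p hp => hS p hp) (yf x) (by linarith)
      have : ((primePiOf S x : ℝ) - (primePi (yf x) : ℝ)) * Real.log (yf x)
          ≤ ((primePiOf S x : ℝ) - (primePiOf S (yf x) : ℝ)) * Real.log (yf x) := by
        apply mul_le_mul_of_nonneg_right (by linarith) hly.le
      linarith
    rcases le_or_gt 0 ((primePiOf S x : ℝ) - (primePi (yf x) : ℝ)) with hN | hN
    · apply div_le_div₀ hψS0 h11 hψpos h2
    · have hnum : ((primePiOf S x : ℝ) - (primePi (yf x) : ℝ)) * Real.log (yf x) ≤ 0 :=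
        mul_nonpos_of_nonpos_of_nonneg hN.le hly.le
      have hden : (0:ℝ) ≤ (primePi x : ℝ) * Real.log x := by positivity
      calc ((primePiOf S x : ℝ) - (primePi (yf x) : ℝ)) * Real.log (yf x)
            / ((primePi x : ℝ) * Real.log x) ≤ 0 := div_nonpos_of_nonpos_of_nonneg hnum hden
      _ ≤ chebyshevPsiOf S x / chebyshevPsi x := div_nonneg hψS0 hψpos.le
  · filter_upwards [hev] with x hx
    obtain ⟨hx2, hy2, hyx, hD, hg, hlog1⟩ := hx
    have hlx : (0:ℝ) < Real.log x := by linarith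
    have hly : (0:ℝ) < Real.log (yf x) := Real.log_pos (by linarith)
    have h1 : Df x ≤ chebyshevPsi x := by
      rw [hpsi]; exact Df_le_psiGen Nat.Prime (fun p => Iff.rfl) x hx2
    have h2 : chebyshevPsi x ≤ (primePi x : ℝ) * Real.log x := by
      rw [hpsi, hpi]; exact psiGen_le_pi_mul_log Nat.Prime (fun _ hp => hp) x hx2
    have h7 : Df x / Real.log x ≤ (primePi x : ℝ) := by
      rw [div_le_iff₀ hlx]; linarith
    have h5 : (primePi (yf x) : ℝ) ≤ yf x + 1 := by
      rw [hpi]; exact ncard_le_self_add_one Nat.Prime (yf x) (by linarith)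
    have h6 : yf x + 1 < Df x / Real.log x := by
      rw [lt_div_iff₀ hlx]
      have := (div_lt_one hD).mp hg
      linarith
    have h8 : (primePi (yf x) : ℝ) < (primePi x : ℝ) := by
      calc (primePi (yf x) : ℝ) ≤ yf x + 1 := h5
      _ < Df x / Real.log x := h6
      _ ≤ (primePi x : ℝ) := h7
    have h13 : (0:ℝ) < ((primePi x : ℝ) - (primePi (yf x) : ℝ)) * Real.log (yf x) :=
      mul_pos (by linarith) hly
    have h12 : ((primePi x : ℝ) - (primePi (yf x) : ℝ)) * Real.log (yf x)
        ≤ chebyshevPsi x := by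
      rw [hpsi, hpi, hpi]
      exact pi_sub_pi_mul_log_le_psiGen Nat.Prime (fun _ hp => hp) x (yf x) hy2 hyx
    have h9 : chebyshevPsiOf S x ≤ (primePiOf S x : ℝ) * Real.log x := by
      rw [hpsiS, hpiS]; exact psiGen_le_pi_mul_log _ (fun p hp => hS p hp) x hx2
    exact div_le_div₀ (by positivity) h9 h13 h12
end

section
/- Let p_i denote the i-th prime number in increasing order (p_1 = 2, p_2 = 3, …). Let S ⊆ {1, 2, 3, …} and α ∈ ℝ, and suppose S has natural density α, i.e. #(S ∩ {1,…,ν})/ν → α as ν → ∞. Then the Dirichlet density of S equals α as well: lim_{s→1⁺} (Σ_{i∈S} p_i^{−s}) / (Σ_{i≥1} p_i^{−s}) = α. (For each real s > 1 both series converge, and the denominator tends to infinity as s → 1⁺, so the ratio is well defined near 1.) -/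
set_option maxHeartbeats 1000000

/-- The `i`-th prime in increasing order, 1-indexed: `nthPrime 1 = 2`,
`nthPrime 2 = 3`, …  (`Nat.nth Nat.Prime` is 0-indexed). -/
noncomputable def nthPrime (i : ℕ) : ℕ := Nat.nth Nat.Prime (i - 1)

open Filter Set

lemma nthPrime_two_le (i : ℕ) : 2 ≤ nthPrime i := (Nat.prime_nth_prime (i-1)).two_le
lemma nthPrime_ge (i : ℕ) (hi : 1 ≤ i) : i + 1 ≤ nthPrime i := by
  have := Nat.add_two_le_nth_prime (i - 1); unfold nthPrime; omega
lemma nthPrime_lt {i j : ℕ} (hi : 1 ≤ i) (hij : i < j) : nthPrime i < nthPrime j :=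
  (Nat.nth_lt_nth Nat.infinite_setOf_prime).2 (by omega)


lemma g_pos (s : ℝ) (i : ℕ) : 0 < ((nthPrime i : ℝ)) ^ (-s) :=
  Real.rpow_pos_of_pos (by exact_mod_cast (nthPrime_two_le i).trans_lt' (by norm_num)) _

lemma g_le_one {s : ℝ} (hs : 0 < s) (i : ℕ) : ((nthPrime i : ℝ)) ^ (-s) ≤ 1 :=
  Real.rpow_le_one_of_one_le_of_nonpos (by exact_mod_cast (nthPrime_two_le i).trans' (by norm_num)) (by linarith)

lemma g_le {s : ℝ} (hs : 0 < s) {i : ℕ} (hi : 1 ≤ i) :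
    ((nthPrime i : ℝ)) ^ (-s) ≤ ((i : ℝ)) ^ (-s) := by
  apply Real.rpow_le_rpow_of_nonpos (by exact_mod_cast hi) _ (by linarith)
  exact_mod_cast (nthPrime_ge i hi).trans' (by omega)

lemma w_nonneg {s : ℝ} (hs : 0 < s) (k : ℕ) :
    0 ≤ ((nthPrime k : ℝ)) ^ (-s) - ((nthPrime (k+1) : ℝ)) ^ (-s) := by
  rcases Nat.eq_zero_or_pos k with rfl | hk
  · simp [nthPrime]
  · have h : (nthPrime k : ℝ) < nthPrime (k+1) := by
      exact_mod_cast nthPrime_lt hk (Nat.lt_succ_self k)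
    have := Real.rpow_le_rpow_of_nonpos (x := (nthPrime k : ℝ))
      (by exact_mod_cast (nthPrime_two_le k).trans_lt' (by norm_num)) h.le (by linarith : -s ≤ 0)
    linarith

lemma w_le_one {s : ℝ} (hs : 0 < s) (k : ℕ) :
    ((nthPrime k : ℝ)) ^ (-s) - ((nthPrime (k+1) : ℝ)) ^ (-s) ≤ 1 := by
  have := g_le_one hs k
  have := (g_pos s (k+1)).le
  linarith

open Classical in
lemma summable_ite {T : Set ℕ} (hT : ∀ i ∈ T, 1 ≤ i) {s : ℝ} (hs : 1 < s) :
    Summable (fun i : ℕ => if i ∈ T then ((nthPrime i : ℝ)) ^ (-s) else 0) := by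
  have hsum : Summable (fun i : ℕ => ((i : ℝ)) ^ (-s)) :=
    Real.summable_nat_rpow.mpr (by linarith)
  refine hsum.of_nonneg_of_le (fun i => ?_) (fun i => ?_)
  · split <;> [exact (g_pos s i).le; rfl]
  · by_cases h : i ∈ T
    · simp only [h, if_true]; exact g_le (by linarith) (hT i h)
    · simp only [h, if_false]; positivity

lemma g_tendsto_zero {s : ℝ} (hs : 0 < s) :
    Tendsto (fun n : ℕ => ((nthPrime n : ℝ)) ^ (-s)) atTop (nhds 0) := by
  have h1 : Tendsto (fun n : ℕ => ((n : ℝ)) ^ (-s)) atTop (nhds 0) :=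
    (tendsto_rpow_neg_atTop hs).comp tendsto_natCast_atTop_atTop
  refine squeeze_zero' (Eventually.of_forall fun n => (g_pos s n).le) ?_ h1
  filter_upwards [eventually_ge_atTop 1] with n hn
  exact g_le hs hn

open Classical in
lemma telescope {s : ℝ} (hs : 0 < s) {ν : ℕ} (hν : 1 ≤ ν) :
    HasSum (fun k : ℕ => if ν ≤ k then
        ((nthPrime k : ℝ)) ^ (-s) - ((nthPrime (k+1) : ℝ)) ^ (-s) else 0)
      (((nthPrime ν : ℝ)) ^ (-s)) := by
  set g : ℕ → ℝ := fun k => ((nthPrime k : ℝ)) ^ (-s) with hg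
  rw [hasSum_iff_tendsto_nat_of_nonneg]
  · have key : ∀ n : ℕ, ν ≤ n →
        (∑ k ∈ Finset.range n, if ν ≤ k then g k - g (k+1) else 0) = g ν - g n := by
      intro n hn
      induction n with
      | zero => omega
      | succ m ih =>
        rcases Nat.lt_or_ge m ν with hm | hm
        · have hmν : ν = m + 1 := by omega
          have hz : ∀ k ∈ Finset.range (m+1), (if ν ≤ k then g k - g (k+1) else 0) = 0 := by
            intro k hk; rw [if_neg]; simp at hk; omega
          rw [Finset.sum_congr rfl hz, hmν]; simp
        · rw [Finset.sum_range_succ, ih hm, if_pos hm]; ring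
    have : Tendsto (fun n : ℕ => g ν - g n) atTop (nhds (g ν - 0)) :=
      tendsto_const_nhds.sub (g_tendsto_zero hs)
    rw [sub_zero] at this
    refine this.congr' ?_
    filter_upwards [eventually_ge_atTop ν] with n hn
    exact (key n hn).symm
  · intro k; split
    · exact w_nonneg hs k
    · rfl

open Classical in
lemma abelKey {T : Set ℕ} (hT : ∀ i ∈ T, 1 ≤ i) {s : ℝ} (hs : 1 < s) :
    Summable (fun k : ℕ => ((T ∩ Set.Icc 1 k).ncard : ℝ) *
        (((nthPrime k : ℝ)) ^ (-s) - ((nthPrime (k+1) : ℝ)) ^ (-s))) ∧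
      (∑' i : ℕ, if i ∈ T then ((nthPrime i : ℝ)) ^ (-s) else 0) =
        ∑' k : ℕ, ((T ∩ Set.Icc 1 k).ncard : ℝ) *
          (((nthPrime k : ℝ)) ^ (-s) - ((nthPrime (k+1) : ℝ)) ^ (-s)) := by
  have hs0 : (0:ℝ) < s := by linarith
  set g : ℕ → ℝ := fun k => ((nthPrime k : ℝ)) ^ (-s) with hg
  set w : ℕ → ℝ := fun k => g k - g (k+1) with hw
  have hwnn : ∀ k, 0 ≤ w k := fun k => w_nonneg hs0 k
  have hsum := summable_ite hT hs
  set F : ℕ → ℕ → ENNReal := fun i k => if i ∈ T ∧ i ≤ k then ENNReal.ofReal (w k) else 0 with hF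
  have stepA : ∀ i, (∑' k, F i k) = ENNReal.ofReal (if i ∈ T then g i else 0) := by
    intro i
    by_cases hi : i ∈ T
    · have ht := telescope hs0 (hT i hi)
      rw [if_pos hi]
      show (∑' k, F i k) = ENNReal.ofReal (((nthPrime i : ℝ)) ^ (-s))
      rw [← ht.tsum_eq, ENNReal.ofReal_tsum_of_nonneg
        (fun k => by by_cases h : i ≤ k <;> simp [h, sub_nonneg.mp (w_nonneg hs0 k)]) ht.summable]
      refine tsum_congr fun k => ?_
      by_cases hik : i ≤ k <;> simp [hF, hw, hg, hi, hik]
    · simp [hF, hi]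
  have stepB : ∀ k, (∑' i, F i k) =
      ((T ∩ Set.Icc 1 k).ncard : ENNReal) * ENNReal.ofReal (w k) := by
    intro k
    have hset : T ∩ Set.Icc 1 k = ↑((Finset.Icc 1 k).filter (· ∈ T)) := by
      ext i; simp only [Finset.coe_filter, Finset.mem_Icc, Set.mem_inter_iff,
        Set.mem_Icc, Set.mem_setOf_eq]
      tauto
    rw [tsum_eq_sum (s := Finset.Icc 1 k) (fun i hi => by
      rw [hF]; dsimp only; rw [if_neg]; rintro ⟨h1, h2⟩
      exact hi (Finset.mem_Icc.2 ⟨hT i h1, h2⟩))]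
    have : ∀ i ∈ Finset.Icc 1 k, F i k = if i ∈ T then ENNReal.ofReal (w k) else 0 := by
      intro i hi
      rw [hF]; dsimp only
      rcases Finset.mem_Icc.1 hi with ⟨h1, h2⟩
      by_cases hiT : i ∈ T <;> simp [hiT, h2]
    rw [Finset.sum_congr rfl this, ← Finset.sum_filter, Finset.sum_const, hset,
      Set.ncard_coe_finset, nsmul_eq_mul]
  have comm := ENNReal.tsum_comm (f := fun i k => F i k)
  have lhs : (∑' i, ∑' k, F i k) =
      ENNReal.ofReal (∑' i : ℕ, if i ∈ T then g i else 0) := by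
    rw [ENNReal.ofReal_tsum_of_nonneg (fun i => by by_cases h : i ∈ T <;> simp [h, (g_pos s i).le]) hsum]
    exact tsum_congr stepA
  have rhs : (∑' k, ∑' i, F i k) =
      ∑' k, ENNReal.ofReal (((T ∩ Set.Icc 1 k).ncard : ℝ) * w k) := by
    refine tsum_congr fun k => ?_
    rw [stepB k, ENNReal.ofReal_mul (by positivity : (0:ℝ) ≤ ((T ∩ Set.Icc 1 k).ncard : ℝ)), ENNReal.ofReal_natCast]
  have main : ENNReal.ofReal (∑' i : ℕ, if i ∈ T then g i else 0) =
      ∑' k, ENNReal.ofReal (((T ∩ Set.Icc 1 k).ncard : ℝ) * w k) := by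
    rw [← lhs, comm, rhs]
  have hne : (∑' k, ENNReal.ofReal (((T ∩ Set.Icc 1 k).ncard : ℝ) * w k)) ≠ ⊤ := by
    rw [← main]; exact ENNReal.ofReal_ne_top
  have hsum2 : Summable (fun k : ℕ => ((T ∩ Set.Icc 1 k).ncard : ℝ) * w k) := by
    have := ENNReal.summable_toReal hne
    refine this.congr fun k => ?_
    exact ENNReal.toReal_ofReal (mul_nonneg (by positivity) (hwnn k))
  refine ⟨hsum2, ?_⟩
  have h1 : (∑' i : ℕ, if i ∈ T then g i else 0) =
      (ENNReal.ofReal (∑' i : ℕ, if i ∈ T then g i else 0)).toReal :=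
    (ENNReal.toReal_ofReal (tsum_nonneg fun i => by by_cases h : i ∈ T <;> simp [h, hg, (g_pos s i).le])).symm
  rw [h1, main, ENNReal.tsum_toReal_eq (fun k => ENNReal.ofReal_ne_top)]
  exact tsum_congr fun k => ENNReal.toReal_ofReal (mul_nonneg (by positivity) (hwnn k))

lemma not_summable_inv_nthPrime :
    ¬ Summable (fun j : ℕ => (1 : ℝ) / (Nat.nth Nat.Prime j : ℝ)) := by
  intro h
  have hinj := Nat.nth_injective Nat.infinite_setOf_prime
  have hvan : ∀ x ∉ Set.range (Nat.nth Nat.Prime),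
      Set.indicator {p | p.Prime} (fun n : ℕ => (1 : ℝ) / n) x = 0 := by
    intro x hx
    apply Set.indicator_of_notMem
    rwa [← Nat.range_nth_of_infinite Nat.infinite_setOf_prime]
  have hcomp : Summable ((Set.indicator {p | p.Prime} (fun n : ℕ => (1 : ℝ) / n)) ∘
      Nat.nth Nat.Prime) := by
    refine h.congr fun j => ?_
    simp only [Function.comp_apply]
    exact (Set.indicator_of_mem (s := {p : ℕ | p.Prime}) (f := fun n : ℕ => (1 : ℝ) / (n : ℝ))
      (Nat.nth_mem_of_infinite Nat.infinite_setOf_prime j)).symm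
  exact not_summable_one_div_on_primes ((hinj.summable_iff hvan).1 hcomp)

lemma partial_sums_unbounded :
    Tendsto (fun K : ℕ => ∑ j ∈ Finset.range K, (1 : ℝ) / (Nat.nth Nat.Prime j : ℝ))
      atTop atTop := by
  by_contra h
  exact not_summable_inv_nthPrime
    ((summable_iff_not_tendsto_nat_atTop_of_nonneg (fun j => by positivity)).2 h)

open Classical in
lemma den_tendsto_atTop :
    Tendsto (fun s : ℝ => ∑' i : ℕ, if 1 ≤ i then ((nthPrime i : ℝ)) ^ (-s) else 0)
      (nhdsWithin 1 (Set.Ioi 1)) atTop := by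
  rw [tendsto_atTop]
  intro b
  obtain ⟨K, hK⟩ := (tendsto_atTop.1 partial_sums_unbounded (b + 1)).exists
  set φ : ℝ → ℝ := fun s => ∑ j ∈ Finset.range K, ((Nat.nth Nat.Prime j : ℝ)) ^ (-s) with hφ
  have hcont : Continuous φ := by
    apply continuous_finset_sum
    intro j _
    have hx : (0:ℝ) < (Nat.nth Nat.Prime j : ℝ) := by
      exact_mod_cast (Nat.prime_nth_prime j).pos
    have : (fun s : ℝ => ((Nat.nth Nat.Prime j : ℝ)) ^ (-s)) =
        fun s => Real.exp (Real.log (Nat.nth Nat.Prime j : ℝ) * (-s)) := by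
      funext s; rw [Real.rpow_def_of_pos hx]
    rw [this]
    exact Real.continuous_exp.comp (continuous_const.mul continuous_neg)
  have hφ1 : φ 1 = ∑ j ∈ Finset.range K, (1 : ℝ) / (Nat.nth Nat.Prime j : ℝ) := by
    refine Finset.sum_congr rfl fun j _ => ?_
    rw [Real.rpow_neg_one, one_div]
  have hev : ∀ᶠ s in nhdsWithin 1 (Set.Ioi 1), b < φ s := by
    have ht : Tendsto φ (nhdsWithin 1 (Set.Ioi 1)) (nhds (φ 1)) :=
      (hcont.tendsto 1).mono_left nhdsWithin_le_nhds
    exact ht.eventually (eventually_gt_nhds (by rw [hφ1]; linarith))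
  filter_upwards [hev, self_mem_nhdsWithin] with s hb hsIoi
  have hs : (1:ℝ) < s := hsIoi
  have hsummable : Summable (fun i : ℕ => if 1 ≤ i then ((nthPrime i : ℝ)) ^ (-s) else 0) := by
    refine (summable_ite (T := {i : ℕ | 1 ≤ i}) (fun i hi => hi) hs).congr fun i => ?_
    by_cases h : 1 ≤ i <;> simp [h]
  have hle : φ s ≤ ∑' i : ℕ, if 1 ≤ i then ((nthPrime i : ℝ)) ^ (-s) else 0 := by
    have h1 : φ s = ∑ i ∈ Finset.Icc 1 K, (if 1 ≤ i then ((nthPrime i : ℝ)) ^ (-s) else 0) := by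
      rw [hφ]
      rw [← Finset.Ico_add_one_right_eq_Icc, Finset.sum_Ico_eq_sum_range]
      refine Finset.sum_congr (by norm_num) fun j _ => ?_
      rw [if_pos (by omega)]
      congr 2
      simp [nthPrime]
    rw [h1]
    refine Summable.sum_le_tsum _ (fun i _ => ?_) hsummable
    by_cases h : 1 ≤ i <;> simp [h, (g_pos s i).le]
  linarith

lemma ncard_Ici_inter (k : ℕ) : (({i : ℕ | 1 ≤ i} ∩ Set.Icc 1 k).ncard : ℝ) = k := by
  have h1 : {i : ℕ | 1 ≤ i} ∩ Set.Icc 1 k = Set.Icc 1 k := by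
    apply Set.inter_eq_self_of_subset_right
    intro i hi; exact hi.1
  rw [h1, ← Finset.coe_Icc, Set.ncard_coe_finset, Nat.card_Icc]
  norm_num

lemma ncard_le (S : Set ℕ) (k : ℕ) : ((S ∩ Set.Icc 1 k).ncard : ℝ) ≤ k := by
  have h := Set.ncard_le_ncard (Set.inter_subset_right (s := S) (t := Set.Icc 1 k))
    (by rw [← Finset.coe_Icc]; exact (Finset.Icc 1 k).finite_toSet)
  rw [← Finset.coe_Icc, Set.ncard_coe_finset, Nat.card_Icc] at h
  exact_mod_cast h.trans (by omega)

open Classical in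
lemma estimate {S : Set ℕ} (hS : ∀ i ∈ S, 1 ≤ i) (α ε : ℝ) (hε : 0 < ε) (M : ℕ)
    (hM : ∀ k, M ≤ k → |((S ∩ Set.Icc 1 k).ncard : ℝ) - α * k| ≤ ε * k)
    {s : ℝ} (hs : 1 < s) :
    |(∑' i : ℕ, if i ∈ S then ((nthPrime i : ℝ)) ^ (-s) else 0) -
      α * (∑' i : ℕ, if 1 ≤ i then ((nthPrime i : ℝ)) ^ (-s) else 0)| ≤
    (∑ k ∈ Finset.range M, |((S ∩ Set.Icc 1 k).ncard : ℝ) - α * k|) +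
      ε * (∑' i : ℕ, if 1 ≤ i then ((nthPrime i : ℝ)) ^ (-s) else 0) := by
  have hs0 : (0:ℝ) < s := by linarith
  set w : ℕ → ℝ := fun k => ((nthPrime k : ℝ)) ^ (-s) - ((nthPrime (k+1) : ℝ)) ^ (-s) with hw
  have hwnn : ∀ k, 0 ≤ w k := fun k => w_nonneg hs0 k
  have hwle : ∀ k, w k ≤ 1 := fun k => by
    have := g_le_one hs0 k; have := (g_pos s (k+1)).le
    simp only [hw]; linarith
  set A : ℕ → ℝ := fun k => ((S ∩ Set.Icc 1 k).ncard : ℝ) with hA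
  obtain ⟨hAsum, hAeq⟩ := abelKey hS hs
  obtain ⟨hBsum', hBeq'⟩ := abelKey (T := {i : ℕ | 1 ≤ i}) (fun i hi => hi) hs
  have hBsum : Summable (fun k : ℕ => (k : ℝ) * w k) := by
    refine hBsum'.congr fun k => ?_
    rw [ncard_Ici_inter]
  have hBeq : (∑' i : ℕ, if 1 ≤ i then ((nthPrime i : ℝ)) ^ (-s) else 0) =
      ∑' k : ℕ, (k : ℝ) * w k := by
    refine Eq.trans (tsum_congr fun i => ?_)
      (hBeq'.trans (tsum_congr fun k => by rw [ncard_Ici_inter]))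
    by_cases h : 1 ≤ i <;> simp [h]
  -- difference as a sum
  have hdiff : (∑' i : ℕ, if i ∈ S then ((nthPrime i : ℝ)) ^ (-s) else 0) -
      α * (∑' i : ℕ, if 1 ≤ i then ((nthPrime i : ℝ)) ^ (-s) else 0) =
      ∑' k : ℕ, (A k - α * k) * w k := by
    rw [hAeq, hBeq, ← tsum_mul_left, ← Summable.tsum_sub hAsum (Summable.mul_left α hBsum)]
    exact tsum_congr fun k => by ring
  have habs_le : ∀ k, |A k - α * k| ≤ (1 + |α|) * k := by
    intro k
    have h1 : |A k| ≤ (k:ℝ) := by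
      rw [abs_of_nonneg (show (0:ℝ) ≤ ((S ∩ Set.Icc 1 k).ncard : ℝ) by positivity)]
      exact ncard_le S k
    calc |A k - α * k| ≤ |A k| + |α * k| := abs_sub _ _
      _ ≤ (k:ℝ) + |α| * k := by rw [abs_mul, abs_of_nonneg (by positivity : (0:ℝ) ≤ (k:ℝ))]
                                exact add_le_add_left h1 _
      _ = (1 + |α|) * k := by ring
  have habs_sum : Summable (fun k : ℕ => |A k - α * k| * w k) := by
    refine Summable.of_nonneg_of_le (fun k => mul_nonneg (abs_nonneg _) (hwnn k))
      (fun k => ?_) (hBsum.mul_left (1 + |α|))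
    calc |A k - α * k| * w k ≤ ((1 + |α|) * k) * w k :=
          mul_le_mul_of_nonneg_right (habs_le k) (hwnn k)
      _ = (1 + |α|) * ((k:ℝ) * w k) := by ring
  have husum : Summable (fun k : ℕ => (A k - α * k) * w k) := by
    refine Summable.of_abs (habs_sum.congr fun k => ?_)
    rw [abs_mul, abs_of_nonneg (hwnn k)]
  rw [hdiff]
  have hnorm_sum : Summable (fun k : ℕ => ‖(A k - α * k) * w k‖) :=
    habs_sum.congr fun k => by rw [Real.norm_eq_abs, abs_mul, abs_of_nonneg (hwnn k)]
  have hstep1 : |∑' k : ℕ, (A k - α * k) * w k| ≤ ∑' k : ℕ, |A k - α * k| * w k := by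
    calc |∑' k : ℕ, (A k - α * k) * w k| = ‖∑' k : ℕ, (A k - α * k) * w k‖ :=
          (Real.norm_eq_abs _).symm
      _ ≤ ∑' k : ℕ, ‖(A k - α * k) * w k‖ := norm_tsum_le_tsum_norm hnorm_sum
      _ = ∑' k : ℕ, |A k - α * k| * w k := tsum_congr fun k => by
          rw [Real.norm_eq_abs, abs_mul, abs_of_nonneg (hwnn k)]
  set v1 : ℕ → ℝ := fun k => if k < M then |A k - α * k| * w k else 0 with hv1
  have hv1sum : Summable v1 :=
    summable_of_ne_finset_zero (s := Finset.range M)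
      (fun k hk => if_neg (by simpa using hk))
  have hv2sum : Summable (fun k : ℕ => ε * ((k:ℝ) * w k)) := hBsum.mul_left ε
  have hstep2 : (∑' k : ℕ, |A k - α * k| * w k) ≤
      ∑' k : ℕ, (v1 k + ε * ((k:ℝ) * w k)) := by
    refine Summable.tsum_le_tsum (fun k => ?_) habs_sum (hv1sum.add hv2sum)
    by_cases hk : k < M
    · simp only [hv1, hk, if_pos]
      have : 0 ≤ ε * ((k:ℝ) * w k) := by
        have := hwnn k; positivity
      linarith
    · simp only [hv1, hk, if_neg, not_false_iff]
      have h2 : |A k - α * k| * w k ≤ (ε * k) * w k :=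
        mul_le_mul_of_nonneg_right (hM k (le_of_not_gt hk)) (hwnn k)
      calc |A k - α * k| * w k ≤ (ε * k) * w k := h2
        _ = 0 + ε * ((k:ℝ) * w k) := by ring
  have hstep3 : (∑' k : ℕ, (v1 k + ε * ((k:ℝ) * w k))) =
      (∑ k ∈ Finset.range M, |A k - α * k| * w k) +
        ε * ∑' k : ℕ, (k:ℝ) * w k := by
    rw [Summable.tsum_add hv1sum hv2sum, tsum_mul_left]
    congr 1
    rw [tsum_eq_sum (s := Finset.range M) (fun k hk => if_neg (by simpa using hk))]
    refine Finset.sum_congr rfl fun k hk => ?_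
    rw [if_pos (Finset.mem_range.1 hk)]
  have hstep4 : (∑ k ∈ Finset.range M, |A k - α * k| * w k) ≤
      ∑ k ∈ Finset.range M, |A k - α * k| :=
    Finset.sum_le_sum fun k _ => mul_le_of_le_one_right (abs_nonneg _) (hwle k)
  calc |∑' k : ℕ, (A k - α * k) * w k| ≤ ∑' k : ℕ, |A k - α * k| * w k := hstep1
    _ ≤ ∑' k : ℕ, (v1 k + ε * ((k:ℝ) * w k)) := hstep2
    _ = (∑ k ∈ Finset.range M, |A k - α * k| * w k) + ε * ∑' k : ℕ, (k:ℝ) * w k := hstep3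
    _ ≤ (∑ k ∈ Finset.range M, |A k - α * k|) + ε * ∑' k : ℕ, (k:ℝ) * w k :=
        add_le_add_left hstep4 _
    _ = (∑ k ∈ Finset.range M, |A k - α * k|) +
        ε * (∑' i : ℕ, if 1 ≤ i then ((nthPrime i : ℝ)) ^ (-s) else 0) := by rw [hBeq]

open Classical in
/-- **Natural density implies Dirichlet density** (for the norms `N_i = p_i`).
Let `S` be a set of positive integers with natural density `α`, i.e.
`#(S ∩ {1,…,ν})/ν → α`.  Then for every `s > 1` the series `Σ_{i∈S} p_i^{−s}`
and `Σ_{i≥1} p_i^{−s}` converge, the denominator tends to `∞` as `s → 1⁺`, and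
the Dirichlet density of `S` equals `α`:
`(Σ_{i∈S} p_i^{−s})/(Σ_{i≥1} p_i^{−s}) → α` as `s → 1⁺`. -/
theorem stmt5 (S : Set ℕ) (hS : ∀ i ∈ S, 1 ≤ i) (α : ℝ)
    (hdens : Filter.Tendsto
      (fun ν : ℕ => ((S ∩ Set.Icc 1 ν).ncard : ℝ) / ν) Filter.atTop (nhds α)) :
    (∀ s : ℝ, 1 < s →
      Summable (fun i : ℕ => if i ∈ S then ((nthPrime i : ℝ)) ^ (-s) else 0) ∧
      Summable (fun i : ℕ => if 1 ≤ i then ((nthPrime i : ℝ)) ^ (-s) else 0)) ∧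
    Filter.Tendsto
      (fun s : ℝ => ∑' i : ℕ, if 1 ≤ i then ((nthPrime i : ℝ)) ^ (-s) else 0)
      (nhdsWithin 1 (Set.Ioi 1)) Filter.atTop ∧
    Filter.Tendsto
      (fun s : ℝ =>
        (∑' i : ℕ, if i ∈ S then ((nthPrime i : ℝ)) ^ (-s) else 0) /
        (∑' i : ℕ, if 1 ≤ i then ((nthPrime i : ℝ)) ^ (-s) else 0))
      (nhdsWithin 1 (Set.Ioi 1)) (nhds α) := by
  refine ⟨fun s hs => ⟨summable_ite hS hs, ?_⟩, den_tendsto_atTop, ?_⟩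
  · refine (summable_ite (T := {i : ℕ | 1 ≤ i}) (fun i hi => hi) hs).congr fun i => ?_
    by_cases h : 1 ≤ i <;> simp [h]
  rw [Metric.tendsto_nhds]
  intro ε hε
  have hε3 : (0:ℝ) < ε/3 := by linarith
  have hM' : ∀ᶠ ν : ℕ in atTop,
      |((S ∩ Set.Icc 1 ν).ncard : ℝ) / ν - α| < ε/3 ∧ 1 ≤ ν := by
    refine Filter.Eventually.and ?_ (eventually_ge_atTop 1)
    have := Metric.tendsto_nhds.1 hdens (ε/3) hε3
    simpa [Real.dist_eq] using this
  obtain ⟨M0, hM0⟩ := eventually_atTop.1 hM'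
  have hM : ∀ k, M0 ≤ k → |((S ∩ Set.Icc 1 k).ncard : ℝ) - α * k| ≤ (ε/3) * k := by
    intro k hk
    obtain ⟨h1, h2⟩ := hM0 k hk
    have hk0 : (0:ℝ) < (k:ℝ) := by exact_mod_cast h2
    have heq : |((S ∩ Set.Icc 1 k).ncard : ℝ) - α * k| =
        |((S ∩ Set.Icc 1 k).ncard : ℝ) / k - α| * k := by
      rw [← abs_of_pos hk0, ← abs_mul]
      congr 1
      field_simp
      simp only [abs_of_pos hk0]
      ring
    rw [heq]
    exact mul_le_mul_of_nonneg_right h1.le hk0.le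
  set C : ℝ := ∑ k ∈ Finset.range M0, |((S ∩ Set.Icc 1 k).ncard : ℝ) - α * k| with hCdef
  have hC : 0 ≤ C := Finset.sum_nonneg fun k _ => abs_nonneg _
  have hbig : ∀ᶠ s : ℝ in nhdsWithin (1:ℝ) (Set.Ioi 1),
      max 1 (C / (ε/3)) ≤ ∑' i : ℕ, if 1 ≤ i then ((nthPrime i : ℝ)) ^ (-s) else 0 :=
    tendsto_atTop.1 den_tendsto_atTop _
  filter_upwards [hbig, self_mem_nhdsWithin] with s hb hsIoi
  have hs : (1:ℝ) < s := hsIoi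
  set Ns : ℝ := ∑' i : ℕ, if i ∈ S then ((nthPrime i : ℝ)) ^ (-s) else 0 with hNs
  set Ds : ℝ := ∑' i : ℕ, if 1 ≤ i then ((nthPrime i : ℝ)) ^ (-s) else 0 with hDs
  have hD1 : (1:ℝ) ≤ Ds := le_trans (le_max_left _ _) hb
  have hD0 : (0:ℝ) < Ds := by linarith
  have hest : |Ns - α * Ds| ≤ C + (ε/3) * Ds := estimate hS α (ε/3) hε3 M0 hM hs
  have hCD : C / Ds ≤ ε/3 := by
    rw [div_le_iff₀ hD0]
    have h1 : C / (ε/3) ≤ Ds := le_trans (le_max_right _ _) hb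
    calc C = (C / (ε/3)) * (ε/3) := by field_simp
      _ ≤ Ds * (ε/3) := mul_le_mul_of_nonneg_right h1 hε3.le
      _ = ε/3 * Ds := by ring
  rw [Real.dist_eq]
  have heq2 : Ns / Ds - α = (Ns - α * Ds) / Ds := by field_simp
  rw [heq2, abs_div, abs_of_pos hD0]
  calc |Ns - α * Ds| / Ds ≤ (C + (ε/3) * Ds) / Ds :=
        div_le_div_of_nonneg_right (c := Ds) hest hD0.le
    _ = C / Ds + ε/3 := by rw [add_div, mul_div_assoc, div_self hD0.ne', mul_one]
    _ ≤ ε/3 + ε/3 := add_le_add_left hCD _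
    _ < ε := by linarith
end

section
/- Let p be a prime number, G a group, g ∈ G an element of finite order m with m dividing p − 1, and g₀ ∈ G. Let σ : G → G be any function and let T : 𝔽_p[G] → 𝔽_p[G] be the 𝔽_p-linear map sending the basis element corresponding to each h ∈ G to the basis element corresponding to σ(h). Suppose that T(ε)·g₀ = g₀·ε holds in 𝔽_p[G] for every idempotent ε lying in the 𝔽_p-linear span of the basis elements {1, g, g², …, g^{m−1}} (the subalgebra of 𝔽_p[G] spanned by the powers of g). Then σ(g) = g₀·g·g₀^{−1} in G. -/
open Finset

/-- **Extracting conjugation from the action on idempotents (Uchida's Claim 1).**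
Let `p` be prime, `g ∈ G` of finite order `m` with `m ∣ p − 1`, `g₀ ∈ G`,
`σ : G → G` a function, and `T : 𝔽_p[G] →ₗ 𝔽_p[G]` the `𝔽_p`-linear map sending
the basis element at `h` to the basis element at `σ(h)`.  If
`T(ε)·g₀ = g₀·ε` for every idempotent `ε` in the `𝔽_p`-span of
`{1, g, …, g^{m−1}}`, then `σ(g) = g₀·g·g₀⁻¹`. -/
theorem stmt8 (p m : ℕ) [Fact p.Prime] (hm : 0 < m) (hdvd : m ∣ p - 1)
    {G : Type} [Group G] (g g₀ : G) (hg : orderOf g = m)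
    (σ : G → G)
    (T : MonoidAlgebra (ZMod p) G →ₗ[ZMod p] MonoidAlgebra (ZMod p) G)
    (hT : ∀ h : G, T (MonoidAlgebra.of (ZMod p) G h) = MonoidAlgebra.of (ZMod p) G (σ h))
    (hidem : ∀ ε : MonoidAlgebra (ZMod p) G,
      ε ∈ Submodule.span (ZMod p)
        (Set.range fun k : Fin m => MonoidAlgebra.of (ZMod p) G (g ^ (k : ℕ))) →
      ε * ε = ε →
      T ε * MonoidAlgebra.of (ZMod p) G g₀ = MonoidAlgebra.of (ZMod p) G g₀ * ε) :
    σ g = g₀ * g * g₀⁻¹ := by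
  classical
  have hp : p.Prime := Fact.out
  have hp2 : 2 ≤ p := hp.two_le
  have hmle : m ≤ p - 1 := Nat.le_of_dvd (by omega) hdvd
  have hm0 : (m : ZMod p) ≠ 0 := by
    rw [Ne, ZMod.natCast_eq_zero_iff]
    intro h
    exact absurd (Nat.le_of_dvd hm h) (by omega)
  set φ : G →* MonoidAlgebra (ZMod p) G := MonoidAlgebra.of (ZMod p) G with hφ
  have hφinj : Function.Injective φ := MonoidAlgebra.of_injective
  set u : MonoidAlgebra (ZMod p) G := φ g with hu
  have hum : u ^ m = 1 := by rw [hu, ← map_pow, ← hg, pow_orderOf_eq_one, map_one]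
  -- the final step from the multiplicative relation
  suffices hrel : φ (σ g) * φ g₀ = φ g₀ * φ g by
    have : σ g * g₀ = g₀ * g := hφinj (by rw [map_mul, map_mul]; exact hrel)
    rw [← this, mul_inv_cancel_right]
  -- special case m = 1
  rcases eq_or_lt_of_le (show 1 ≤ m from hm) with hm1 | hm1
  · have hg1 : g = 1 := by rw [← orderOf_eq_one_iff, hg, ← hm1]
    have hmem : (1 : MonoidAlgebra (ZMod p) G) ∈ Submodule.span (ZMod p)
        (Set.range fun k : Fin m => MonoidAlgebra.of (ZMod p) G (g ^ (k : ℕ))) := by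
      refine Submodule.subset_span ⟨⟨0, hm⟩, ?_⟩
      simp [MonoidAlgebra.one_def]
    have h1 := hidem 1 hmem (one_mul 1)
    rw [mul_one] at h1
    have hT1 : T 1 = φ (σ g) := by
      have := hT g
      rw [hg1] at this ⊢
      simpa using this
    rw [hT1] at h1
    rw [hg1] at h1 ⊢
    rw [map_one, mul_one, h1]
  -- main case 1 < m : get a primitive m-th root of unity ζ in (ZMod p)ˣ
  obtain ⟨h0, hh0⟩ := IsCyclic.exists_ofOrder_eq_natCard (α := (ZMod p)ˣ)
  have hcard : Nat.card (ZMod p)ˣ = p - 1 := by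
    rw [Nat.card_eq_fintype_card, ZMod.card_units]
  rw [hcard] at hh0
  have hζord : orderOf (h0 ^ ((p - 1) / m)) = m := by
    rw [← hh0]
    exact orderOf_pow_orderOf_div (by rw [hh0]; omega) (by rw [hh0]; exact hdvd)
  set ζu : (ZMod p)ˣ := h0 ^ ((p - 1) / m) with hζu
  set ζ : ZMod p := (ζu : ZMod p) with hζ
  have hζ0 : ζ ≠ 0 := ζu.ne_zero
  have hζm : ζ ^ m = 1 := by
    rw [hζ, ← Units.val_pow_eq_pow_val, ← hζord, pow_orderOf_eq_one, Units.val_one]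
  have hζinvm : (ζ⁻¹) ^ m = 1 := by
    rw [inv_pow, hζm, inv_one]
  -- coefficient sum claim
  have hcoef : ∀ k < m, (∑ j ∈ range m, (ζ * (ζ⁻¹) ^ k) ^ j)
      = if k = 1 then (m : ZMod p) else 0 := by
    intro k hk
    by_cases hk1 : k = 1
    · subst hk1
      simp [pow_one, mul_inv_cancel₀ hζ0]
    · rw [if_neg hk1]
      set x : ZMod p := ζ * (ζ⁻¹) ^ k with hx
      have hxm : x ^ m = 1 := by
        rw [hx, mul_pow, hζm, one_mul, ← pow_mul, mul_comm, pow_mul, hζinvm, one_pow]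
      have hxne : x ≠ 1 := by
        intro hx1
        have hζk : ζ ^ k = ζ ^ 1 := by
          have h2 : ζ * (ζ⁻¹) ^ k * ζ ^ k = 1 * ζ ^ k := by rw [← hx, hx1]
          rw [one_mul, mul_assoc, ← mul_pow, inv_mul_cancel₀ hζ0, one_pow, mul_one] at h2
          rw [pow_one]
          exact h2.symm
        have hζuk : ζu ^ k = ζu ^ 1 := by
          ext
          rw [Units.val_pow_eq_pow_val, Units.val_pow_eq_pow_val]
          exact hζk
        rw [pow_eq_pow_iff_modEq, hζord] at hζuk
        exact hk1 (Nat.ModEq.eq_of_lt_of_lt hζuk hk hm1)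
      rw [geom_sum_eq hxne, hxm, sub_self, zero_div]
  -- the idempotents
  set e : ZMod p → MonoidAlgebra (ZMod p) G := fun c =>
    (m : ZMod p)⁻¹ • ∑ k ∈ range m, c ^ k • u ^ k with he
  have hmem : ∀ c : ZMod p, e c ∈ Submodule.span (ZMod p)
      (Set.range fun k : Fin m => MonoidAlgebra.of (ZMod p) G (g ^ (k : ℕ))) := by
    intro c
    refine Submodule.smul_mem _ _ (Submodule.sum_mem _ fun k hk => Submodule.smul_mem _ _ ?_)
    refine Submodule.subset_span ⟨⟨k, mem_range.mp hk⟩, ?_⟩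
    rw [hu, hφ, ← map_pow]
  have hidem' : ∀ c : ZMod p, c ^ m = 1 → e c * e c = e c := by
    intro c hc
    have hxk : ∀ k : ℕ, (c • u) ^ k = c ^ k • u ^ k := fun k => smul_pow c u k
    set S : MonoidAlgebra (ZMod p) G := ∑ k ∈ range m, (c • u) ^ k with hS
    have heS : e c = (m : ZMod p)⁻¹ • S := by
      rw [he, hS]
      simp only [hxk]
    have hxm : (c • u) ^ m = 1 := by rw [hxk, hc, hum, one_smul]
    have hSx : S * (c • u) = S := by
      have h2 := geom_sum_mul (c • u) m
      rw [hxm, sub_self, ← hS, mul_sub, mul_one, sub_eq_zero] at h2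
      exact h2
    have hSxj : ∀ j : ℕ, S * (c • u) ^ j = S := by
      intro j
      induction j with
      | zero => rw [pow_zero, mul_one]
      | succ n ih => rw [pow_succ, ← mul_assoc, ih, hSx]
    have hSS : S * S = (m : ZMod p) • S := by
      calc S * S = ∑ j ∈ range m, S * (c • u) ^ j := by rw [← Finset.mul_sum, ← hS]
        _ = ∑ _j ∈ range m, S := sum_congr rfl fun j _ => hSxj j
        _ = m • S := by rw [sum_const, card_range]
        _ = (m : ZMod p) • S := (Nat.cast_smul_eq_nsmul _ _ _).symm
    rw [heS, smul_mul_assoc, mul_smul_comm, hSS, smul_smul, smul_smul,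
      mul_assoc, inv_mul_cancel₀ hm0, mul_one]
  -- reconstruction of u from the idempotents
  have hrecon : ∑ j ∈ range m, ζ ^ j • e (ζ⁻¹ ^ j) = u := by
    have step1 : ∀ j : ℕ, ζ ^ j • e (ζ⁻¹ ^ j)
        = (m : ZMod p)⁻¹ • ∑ k ∈ range m, ((ζ * (ζ⁻¹) ^ k) ^ j) • u ^ k := by
      intro j
      rw [he]
      rw [smul_comm, Finset.smul_sum]
      congr 1
      refine sum_congr rfl fun k _ => ?_
      rw [smul_smul, ← pow_right_comm, mul_pow]
    calc ∑ j ∈ range m, ζ ^ j • e (ζ⁻¹ ^ j)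
        = ∑ j ∈ range m, (m : ZMod p)⁻¹ •
            ∑ k ∈ range m, ((ζ * (ζ⁻¹) ^ k) ^ j) • u ^ k := sum_congr rfl fun j _ => step1 j
      _ = (m : ZMod p)⁻¹ • ∑ j ∈ range m,
            ∑ k ∈ range m, ((ζ * (ζ⁻¹) ^ k) ^ j) • u ^ k := by rw [Finset.smul_sum]
      _ = (m : ZMod p)⁻¹ • ∑ k ∈ range m,
            (∑ j ∈ range m, (ζ * (ζ⁻¹) ^ k) ^ j) • u ^ k := by
          rw [Finset.sum_comm]
          congr 1
          exact sum_congr rfl fun k _ => by rw [Finset.sum_smul]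
      _ = (m : ZMod p)⁻¹ • ∑ k ∈ range m,
            (if k = 1 then (m : ZMod p) else 0) • u ^ k := by
          congr 1
          exact sum_congr rfl fun k hk => by rw [hcoef k (mem_range.mp hk)]
      _ = (m : ZMod p)⁻¹ • ((m : ZMod p) • u ^ 1) := by
          congr 1
          have hsplit : ∀ k ∈ range m, (if k = 1 then (m : ZMod p) else 0) • u ^ k
              = if k = 1 then (m : ZMod p) • u ^ k else 0 := by
            intro k _
            split <;> simp
          rw [sum_congr rfl hsplit,
            Finset.sum_ite_eq' (range m) 1 fun k => (m : ZMod p) • u ^ k,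
            if_pos (mem_range.mpr hm1)]
      _ = u := by rw [smul_smul, inv_mul_cancel₀ hm0, one_smul, pow_one]
  -- apply the hypothesis to each idempotent and sum up
  have hTj : ∀ j : ℕ, T (e (ζ⁻¹ ^ j)) * φ g₀ = φ g₀ * e (ζ⁻¹ ^ j) := by
    intro j
    exact hidem _ (hmem _) (hidem' _ (by rw [← pow_mul, mul_comm, pow_mul, hζinvm, one_pow]))
  calc φ (σ g) * φ g₀ = T u * φ g₀ := by rw [hu, hT]
    _ = T (∑ j ∈ range m, ζ ^ j • e (ζ⁻¹ ^ j)) * φ g₀ := by rw [hrecon]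
    _ = (∑ j ∈ range m, ζ ^ j • T (e (ζ⁻¹ ^ j))) * φ g₀ := by
        rw [map_sum]
        simp only [map_smul]
    _ = ∑ j ∈ range m, ζ ^ j • (T (e (ζ⁻¹ ^ j)) * φ g₀) := by
        rw [Finset.sum_mul]
        simp only [smul_mul_assoc]
    _ = ∑ j ∈ range m, ζ ^ j • (φ g₀ * e (ζ⁻¹ ^ j)) := sum_congr rfl fun j _ => by rw [hTj j]
    _ = φ g₀ * ∑ j ∈ range m, ζ ^ j • e (ζ⁻¹ ^ j) := by
        rw [Finset.mul_sum]
        simp only [mul_smul_comm]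
    _ = φ g₀ * φ g := by rw [hrecon, hu]
end

section
/- Let G be a finite group and p a prime number. The second group cohomology of G with coefficients in the group algebra 𝔽_p[G], where G acts by left multiplication (the left regular representation), vanishes: H²(G, 𝔽_p[G]) = 0. -/
open groupCohomology Finsupp

/-- Every 2-cocycle of the left regular representation of a finite group is a coboundary. -/
lemma twoCoboundaries_leftRegular_eq_top (k : Type) [CommRing k] (G : Type) [Group G]
    [Finite G] :
    groupCohomology.cocycles₂ (Rep.leftRegular k G) ≤
      groupCohomology.coboundaries₂ (Rep.leftRegular k G) := by
  have : Fintype G := Fintype.ofFinite G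
  intro f hf0
  have hf := (mem_cocycles₂_def (f : G × G → (Rep.leftRegular k G))).1 hf0
  -- restate everything purely in terms of finitely supported functions
  set F : G × G → MonoidAlgebra k G := fun q => f q with hF
  have hf' : ∀ a b c : G, Representation.ofMulAction k G G a (F (b, c)) - F (a * b, c)
      + F (a, b * c) - F (a, b) = (0 : MonoidAlgebra k G) := fun a b c => hf a b c
  have hρ : ∀ (g t : G) (y : MonoidAlgebra k G),
      (Representation.ofMulAction k G G g y).coeff t = y.coeff (g⁻¹ * t) := by
    intro g t y
    rw [Representation.ofMulAction_def]
    conv_lhs => rw [show t = g • (g⁻¹ * t) by simp [smul_eq_mul]]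
    simp only [LinearMap.comp_apply, LinearEquiv.coe_coe, Finsupp.lmapDomain_apply]
    exact Finsupp.mapDomain_apply (MulAction.injective g) _ _
  set x : G → MonoidAlgebra k G := fun g => MonoidAlgebra.ofCoeff
    (Finsupp.equivFunOnFinite.symm (fun t => (F (g, g⁻¹ * t)).coeff t))
    with hx
  refine ⟨x, funext fun ⟨g, h⟩ => ?_⟩
  show Representation.ofMulAction k G G g (x h) - x (g * h) + x g = F (g, h)
  apply MonoidAlgebra.coeff_injective
  ext t
  have key := congrArg (fun y => MonoidAlgebra.coeff y t) (hf' g h (h⁻¹ * (g⁻¹ * t)))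
  simp only [MonoidAlgebra.coeff_sub, MonoidAlgebra.coeff_add, MonoidAlgebra.coeff_zero,
    Finsupp.sub_apply, Finsupp.add_apply, Finsupp.coe_zero, Pi.zero_apply] at key ⊢
  rw [hρ] at key ⊢
  simp only [smul_eq_mul, hx, MonoidAlgebra.coeff_ofCoeff, Finsupp.coe_equivFunOnFinite_symm]
    at key ⊢
  have e1 : h * (h⁻¹ * (g⁻¹ * t)) = g⁻¹ * t := by group
  have e2 : (g * h)⁻¹ * t = h⁻¹ * (g⁻¹ * t) := by group
  rw [e1] at key
  rw [e2]
  linear_combination key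

/-- **Vanishing of `H²(G, 𝔽_p[G])` (an instance of Shapiro's lemma).**
Let `G` be a finite group and `p` a prime.  The second group cohomology of `G`
with coefficients in the left regular representation `𝔽_p[G]` (with `G` acting
by left multiplication on basis elements) vanishes. -/
theorem stmt10 (p : ℕ) (hp : p.Prime) (G : Type) [Group G] [Finite G] :
    Subsingleton (groupCohomology (Rep.leftRegular (ZMod p) G) 2) := by
  have h1 : Subsingleton (groupCohomology.H2 (Rep.leftRegular (ZMod p) G)) := by
    refine ⟨fun a b => ?_⟩
    induction a using groupCohomology.H2_induction_on with | h a => ?_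
    induction b using groupCohomology.H2_induction_on with | h b => ?_
    rw [groupCohomology.H2π_eq_iff]
    exact twoCoboundaries_leftRegular_eq_top (ZMod p) G (sub_mem a.2 b.2)
  exact h1
end
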